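/- arXiv:2404.19476 — 10 statements merged into one kernel-verified Lean document; each statement's English description precedes it below -/
import Mathlib

section
/- Let H and L be finite-dimensional complex inner product spaces and let S be a unitary operator on the direct sum H ⊕ L (with the inner product making H and L orthogonal). Then for every vector ξ ∈ H there exist vectors τ ∈ H and v ∈ L such that S(ξ ⊕ v) = τ ⊕ v. -/
/-!
**Statement 0.**
Let `H` and `L` be finite-dimensional complex inner product spaces and let `S` be a unitary
operator (linear isometric bijection) on the orthogonal direct sum `H ⊕ L`
(modelled as `WithLp 2 (H × L)`).  Then for every `ξ ∈ H` there exist `τ ∈ H` and `v ∈ L`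
such that `S (ξ ⊕ v) = τ ⊕ v`.
-/

local notation "⟪" x ", " y "⟫" => inner (𝕜 := ℂ) x y

theorem transduction_exists
    {H L : Type*}
    [NormedAddCommGroup H] [InnerProductSpace ℂ H] [FiniteDimensional ℂ H]
    [NormedAddCommGroup L] [InnerProductSpace ℂ L] [FiniteDimensional ℂ L]
    (S : WithLp 2 (H × L) ≃ₗᵢ[ℂ] WithLp 2 (H × L)) (ξ : H) :
    ∃ (τ : H) (v : L),
      S ((WithLp.equiv 2 (H × L)).symm (ξ, v)) = (WithLp.equiv 2 (H × L)).symm (τ, v) := by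
  classical
  set e := WithLp.equiv 2 (H × L) with he
  -- the "corner" operator B : L → L, v ↦ snd (S (0 ⊕ v))
  set B : L →ₗ[ℂ] L :=
    (((LinearMap.snd ℂ H L).comp (WithLp.linearEquiv 2 ℂ (H × L)).toLinearMap).comp
      S.toLinearEquiv.toLinearMap).comp
      ((WithLp.linearEquiv 2 ℂ (H × L)).symm.toLinearMap.comp (LinearMap.inr ℂ H L)) with hBdef
  have hB : ∀ v : L, B v = (S (e.symm (0, v))).snd := fun v => rfl
  -- B is a contraction
  have hnorm : ∀ v : L, ‖(S (e.symm (0, v))).fst‖ ^ 2 + ‖B v‖ ^ 2 = ‖v‖ ^ 2 := by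
    intro v
    have h1 : ‖S (e.symm (0, v))‖ = ‖e.symm (0, v)‖ := S.norm_map _
    have h2 := WithLp.prod_norm_sq_eq_of_L2 (S (e.symm (0, v)))
    have h3 := WithLp.prod_norm_sq_eq_of_L2 (e.symm (0, v))
    rw [show (e.symm (0, v)).fst = 0 from rfl, show (e.symm (0, v)).snd = v from rfl] at h3
    simp only [norm_zero] at h3
    rw [hB v, ← h2, h1, h3]
    ring
  have hBle : ∀ v : L, ‖B v‖ ^ 2 ≤ ‖v‖ ^ 2 := by
    intro v
    have := hnorm v
    nlinarith [sq_nonneg ‖(S (e.symm (0, v))).fst‖]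
  -- fixed points of the adjoint of B give fixed points of S inside L
  have hfix : ∀ u : L, LinearMap.adjoint B u = u → S (e.symm (0, u)) = e.symm (0, u) := by
    intro u hu
    have hinner : ⟪u, B u⟫ = ⟪u, u⟫ := by
      rw [← LinearMap.adjoint_inner_left, hu]
    have hBu : B u = u := by
      have hsq : ‖u - B u‖ ^ 2 ≤ 0 := by
        rw [norm_sub_sq (𝕜 := ℂ)]
        have hre : RCLike.re ⟪u, B u⟫ = ‖u‖ ^ 2 := by
          rw [hinner]
          exact inner_self_eq_norm_sq u
        rw [hre]
        nlinarith [hBle u]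
      have h0 : u - B u = 0 := by
        have hn := norm_nonneg (u - B u)
        have : ‖u - B u‖ = 0 := by nlinarith
        exact norm_eq_zero.mp this
      exact (sub_eq_zero.mp h0).symm
    have hfst : (S (e.symm (0, u))).fst = 0 := by
      have := hnorm u
      rw [hBu] at this
      have h0 : ‖(S (e.symm (0, u))).fst‖ ^ 2 = 0 := by linarith
      have : ‖(S (e.symm (0, u))).fst‖ = 0 := by
        nlinarith [norm_nonneg (S (e.symm (0, u))).fst]
      exact norm_eq_zero.mp this
    have hpair : e (S (e.symm (0, u))) = ((0 : H), u) := by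
      refine Prod.ext ?_ ?_
      · exact hfst
      · change (S (e.symm (0, u))).snd = u; rw [← hB, hBu]
    exact (e.eq_symm_apply.mpr hpair)
  -- set up the equation (id - B) v = c
  set T : L →ₗ[ℂ] L := LinearMap.id - B with hT
  set c : L := (S (e.symm (ξ, 0))).snd with hc
  have hcmem : c ∈ LinearMap.range T := by
    rw [← Submodule.orthogonal_orthogonal (LinearMap.range T)]
    rw [Submodule.mem_orthogonal]
    intro u hu
    -- u is orthogonal to the range of T, so adjoint T u = 0, so adjoint B u = u
    have hadj : LinearMap.adjoint B u = u := by
      have h1 : LinearMap.adjoint T u = 0 := by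
        apply ext_inner_left ℂ
        intro x
        rw [LinearMap.adjoint_inner_right, inner_zero_right]
        exact (Submodule.mem_orthogonal (LinearMap.range T) u).mp hu (T x)
          (LinearMap.mem_range_self T x)
      have hid : LinearMap.adjoint (LinearMap.id : L →ₗ[ℂ] L) = LinearMap.id := by
        rw [← LinearMap.star_eq_adjoint, ← Module.End.one_eq_id, star_one]
      have h2 : LinearMap.adjoint T u = u - LinearMap.adjoint B u := by
        rw [hT, map_sub, hid]
        simp
      rw [h1] at h2
      exact (sub_eq_zero.mp h2.symm).symm
    have hSfix := hfix u hadj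
    -- now compute ⟪u, c⟫ = 0
    have key : ⟪e.symm ((0 : H), u), S (e.symm (ξ, 0))⟫ = 0 := by
      calc ⟪e.symm ((0 : H), u), S (e.symm (ξ, 0))⟫
          = ⟪S (e.symm ((0 : H), u)), S (e.symm (ξ, 0))⟫ := by rw [hSfix]
        _ = ⟪e.symm ((0 : H), u), e.symm (ξ, (0 : L))⟫ := S.inner_map_map _ _
        _ = 0 := by
            rw [WithLp.prod_inner_apply]
            simp [he]
    rw [WithLp.prod_inner_apply] at key
    simpa [he, hc] using key
  obtain ⟨v, hv⟩ := hcmem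
  have hveq : B v + c = v := by
    have : v - B v = c := by
      rw [← hv, hT]; simp
    rw [← this]; abel
  refine ⟨(S (e.symm (ξ, v))).fst, v, ?_⟩
  have hadd : e.symm (ξ, v) = e.symm (ξ, 0) + e.symm (0, v) := by
    have h : (ξ, v) = ((ξ, (0 : L)) + ((0 : H), v) : H × L) := by simp
    rw [h]
    exact map_add (WithLp.linearEquiv 2 ℂ (H × L)).symm _ _
  have hsnd : (S (e.symm (ξ, v))).snd = v := by
    rw [hadd, map_add, WithLp.add_snd, ← hB, ← hc, add_comm]
    exact hveq
  apply e.eq_symm_apply.mpr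
  refine Prod.ext ?_ ?_
  · rfl
  · exact hsnd
end

section
/- Let H and L be finite-dimensional complex inner product spaces and let S be a unitary operator on H ⊕ L. If ξ, τ, τ' ∈ H and v, v' ∈ L satisfy S(ξ ⊕ v) = τ ⊕ v and S(ξ ⊕ v') = τ' ⊕ v', then τ = τ'. In other words, the transduced vector τ is uniquely determined by S and ξ (although the catalyst v need not be unique). -/
/-!
**Statement 1.**
Let `H` and `L` be finite-dimensional complex inner product spaces and let `S` be a unitary
operator (linear isometric bijection) on the orthogonal direct sum `H ⊕ L`
(modelled as `WithLp 2 (H × L)`).  If `S (ξ ⊕ v) = τ ⊕ v` and `S (ξ ⊕ v') = τ' ⊕ v'`,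
then `τ = τ'`: the transduced vector is uniquely determined by `S` and `ξ`.
-/

theorem transduction_unique
    {H L : Type*}
    [NormedAddCommGroup H] [InnerProductSpace ℂ H] [FiniteDimensional ℂ H]
    [NormedAddCommGroup L] [InnerProductSpace ℂ L] [FiniteDimensional ℂ L]
    (S : WithLp 2 (H × L) ≃ₗᵢ[ℂ] WithLp 2 (H × L))
    (ξ τ τ' : H) (v v' : L)
    (h : S ((WithLp.equiv 2 (H × L)).symm (ξ, v)) = (WithLp.equiv 2 (H × L)).symm (τ, v))
    (h' : S ((WithLp.equiv 2 (H × L)).symm (ξ, v')) = (WithLp.equiv 2 (H × L)).symm (τ', v')) :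
    τ = τ' := by
  have hsub : S ((WithLp.equiv 2 (H × L)).symm (ξ, v) - (WithLp.equiv 2 (H × L)).symm (ξ, v'))
      = (WithLp.equiv 2 (H × L)).symm (τ, v) - (WithLp.equiv 2 (H × L)).symm (τ', v') := by
    rw [map_sub, h, h']
  have hnorm := S.norm_map ((WithLp.equiv 2 (H × L)).symm (ξ, v) -
    (WithLp.equiv 2 (H × L)).symm (ξ, v'))
  rw [hsub] at hnorm
  have hn2 : ‖(WithLp.equiv 2 (H × L)).symm (τ, v) - (WithLp.equiv 2 (H × L)).symm (τ', v')‖ ^ 2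
      = ‖(WithLp.equiv 2 (H × L)).symm (ξ, v) - (WithLp.equiv 2 (H × L)).symm (ξ, v')‖ ^ 2 := by
    rw [hnorm]
  rw [WithLp.prod_norm_sq_eq_of_L2, WithLp.prod_norm_sq_eq_of_L2] at hn2
  simp only [WithLp.sub_fst, WithLp.sub_snd, WithLp.equiv_symm_apply, WithLp.toLp_fst, WithLp.toLp_snd,
    sub_self, norm_zero] at hn2
  have : ‖τ - τ'‖ ^ 2 = 0 := by nlinarith [norm_nonneg (τ - τ'), norm_nonneg (v - v')]
  have := pow_eq_zero_iff (n := 2) (by norm_num) |>.mp this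
  rwa [norm_sub_eq_zero_iff] at this
end

section
/- Let H and L be finite-dimensional complex inner product spaces and let S be a unitary operator on H ⊕ L. Then there exists a unitary operator T on H such that for every ξ ∈ H there is a vector v ∈ L with S(ξ ⊕ v) = (Tξ) ⊕ v. That is, the map sending each ξ ∈ H to its transduced vector τ(S, ξ) is a unitary operator on H. -/
open scoped InnerProductSpace
open LinearMap


/-!
**Statement 2.**
Let `H` and `L` be finite-dimensional complex inner product spaces and let `S` be a unitary
operator (linear isometric bijection) on the orthogonal direct sum `H ⊕ L`
(modelled as `WithLp 2 (H × L)`).  Then there is a unitary operator `T` on `H` such that for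
every `ξ ∈ H` there is `v ∈ L` with `S (ξ ⊕ v) = (T ξ) ⊕ v`; i.e. the map `ξ ↦ τ(S, ξ)`
is a unitary operator on `H`.
-/

set_option maxHeartbeats 2000000 in
theorem transduction_map_unitary
    {H L : Type*}
    [NormedAddCommGroup H] [InnerProductSpace ℂ H] [FiniteDimensional ℂ H]
    [NormedAddCommGroup L] [InnerProductSpace ℂ L] [FiniteDimensional ℂ L]
    (S : WithLp 2 (H × L) ≃ₗᵢ[ℂ] WithLp 2 (H × L)) :
    ∃ T : H ≃ₗᵢ[ℂ] H, ∀ ξ : H, ∃ v : L,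
      S ((WithLp.equiv 2 (H × L)).symm (ξ, v)) = (WithLp.equiv 2 (H × L)).symm (T ξ, v) := by
  classical
  set iH : H →ₗ[ℂ] WithLp 2 (H × L) :=
    (WithLp.linearEquiv 2 ℂ (H × L)).symm.toLinearMap ∘ₗ LinearMap.inl ℂ H L with hiH
  set iL : L →ₗ[ℂ] WithLp 2 (H × L) :=
    (WithLp.linearEquiv 2 ℂ (H × L)).symm.toLinearMap ∘ₗ LinearMap.inr ℂ H L with hiL
  set pH : WithLp 2 (H × L) →ₗ[ℂ] H :=
    LinearMap.fst ℂ H L ∘ₗ (WithLp.linearEquiv 2 ℂ (H × L)).toLinearMap with hpH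
  set pL : WithLp 2 (H × L) →ₗ[ℂ] L :=
    LinearMap.snd ℂ H L ∘ₗ (WithLp.linearEquiv 2 ℂ (H × L)).toLinearMap with hpL
  set Sl : WithLp 2 (H × L) →ₗ[ℂ] WithLp 2 (H × L) := S.toLinearEquiv.toLinearMap with hSl
  have hSl_apply : ∀ x, Sl x = S x := fun _ => rfl
  set A : H →ₗ[ℂ] H := pH ∘ₗ Sl ∘ₗ iH with hA
  set B : L →ₗ[ℂ] H := pH ∘ₗ Sl ∘ₗ iL with hB
  set C : H →ₗ[ℂ] L := pL ∘ₗ Sl ∘ₗ iH with hC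
  set D : L →ₗ[ℂ] L := pL ∘ₗ Sl ∘ₗ iL with hD
  set G : L →ₗ[ℂ] L := LinearMap.id - D with hG
  -- basic component facts
  have hdecomp : ∀ x : WithLp 2 (H × L),
      x = (WithLp.equiv 2 (H × L)).symm (pH x, pL x) := fun x => rfl
  have hSinL : ∀ v : L, S (iL v) = (WithLp.equiv 2 (H × L)).symm (B v, D v) := fun v => rfl
  have hSinH : ∀ ξ : H, S (iH ξ) = (WithLp.equiv 2 (H × L)).symm (A ξ, C ξ) := fun ξ => rfl
  have hnormE : ∀ x : WithLp 2 (H × L), ‖x‖ ^ 2 = ‖pH x‖ ^ 2 + ‖pL x‖ ^ 2 := by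
    intro x; exact WithLp.prod_norm_sq_eq_of_L2 x
  have hinnerE : ∀ x y : WithLp 2 (H × L),
      (inner ℂ x y : ℂ) = inner ℂ (pH x) (pH y) + inner ℂ (pL x) (pL y) := by
    intro x y; exact WithLp.prod_inner_apply x y
  have hnormInL : ∀ v : L, ‖iL v‖ = ‖v‖ := by
    intro v
    have := hnormE (iL v)
    have h0 : pH (iL v) = (0 : H) := rfl
    have h1 : pL (iL v) = v := rfl
    rw [h0, h1, norm_zero] at this
    have h2 : ‖iL v‖ ^ 2 = ‖v‖ ^ 2 := by simpa using this
    exact (sq_eq_sq₀ (norm_nonneg _) (norm_nonneg _)).mp h2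
  -- norm identity for S on (ξ, v)
  have hBDnorm : ∀ v : L, ‖B v‖ ^ 2 + ‖D v‖ ^ 2 = ‖v‖ ^ 2 := by
    intro v
    have h1 : ‖S (iL v)‖ = ‖iL v‖ := S.norm_map _
    have h2 := hnormE (S (iL v))
    have h3 : pH (S (iL v)) = B v := rfl
    have h4 : pL (S (iL v)) = D v := rfl
    rw [h3, h4, h1, hnormInL] at h2
    linarith
  -- every element of (range G)ᗮ is fixed by S (as an element of L)
  have hfix : ∀ w ∈ (LinearMap.range G)ᗮ, S (iL w) = iL w := by
    intro w hw
    have hDw : D w = w := by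
      have hinner : (inner ℂ (D w) w : ℂ) = inner ℂ w w := by
        have := hw (G w) (LinearMap.mem_range_self G w)
        have hGw : (inner ℂ (G w) w : ℂ) = inner ℂ w w - inner ℂ (D w) w := by
          simp [hG, inner_sub_left]
        rw [hGw] at this
        linear_combination -this
      have hDle : ‖D w‖ ≤ ‖w‖ := by
        have := hBDnorm w
        nlinarith [sq_nonneg (‖B w‖), norm_nonneg (D w), norm_nonneg w]
      have hre : RCLike.re (inner ℂ (D w) w : ℂ) = ‖w‖ ^ 2 := by
        rw [hinner]
        simpa using inner_self_eq_norm_sq (𝕜 := ℂ) w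
      have hsub : ‖D w - w‖ ^ 2 = ‖D w‖ ^ 2 - 2 * RCLike.re (inner ℂ (D w) w : ℂ) + ‖w‖ ^ 2 :=
        norm_sub_sq (𝕜 := ℂ) _ _
      have : ‖D w - w‖ ^ 2 ≤ 0 := by
        rw [hsub, hre]
        nlinarith [norm_nonneg (D w), norm_nonneg w]
      have : ‖D w - w‖ = 0 := le_antisymm (by nlinarith [norm_nonneg (D w - w)]) (norm_nonneg _)
      rwa [norm_eq_zero, sub_eq_zero] at this
    have hBw : B w = 0 := by
      have := hBDnorm w
      rw [hDw] at this
      have : ‖B w‖ ^ 2 = 0 := by linarith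
      have : ‖B w‖ = 0 := by nlinarith [norm_nonneg (B w)]
      rwa [norm_eq_zero] at this
    rw [hSinL, hBw, hDw]
    rfl
  -- C ξ lies in the range of G
  have hCmem : ∀ ξ : H, C ξ ∈ LinearMap.range G := by
    intro ξ
    rw [← Submodule.orthogonal_orthogonal (LinearMap.range G)]
    intro w hw
    have hfw := hfix w hw
    have hfw' : S.symm (iL w) = iL w := by
      nth_rewrite 1 [← hfw]; exact S.symm_apply_apply _
    have h1 : (inner ℂ (iL w) (S (iH ξ)) : ℂ) = inner ℂ (S.symm (iL w)) (iH ξ) := by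
      conv_lhs => rw [← S.apply_symm_apply (iL w)]
      exact S.inner_map_map _ _
    rw [hfw'] at h1
    have h2 : (inner ℂ (iL w) (iH ξ) : ℂ) = 0 := by
      rw [hinnerE]
      have e1 : pH (iL w) = (0 : H) := rfl
      have e2 : pL (iH ξ) = (0 : L) := rfl
      rw [e1, e2, inner_zero_left, inner_zero_right, add_zero]
    rw [h2] at h1
    have h3 : (inner ℂ (iL w) (S (iH ξ)) : ℂ) = inner ℂ w (C ξ) := by
      rw [hinnerE]
      have e1 : pH (iL w) = (0 : H) := rfl
      have e2 : pL (iL w) = w := rfl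
      have e3 : pL (S (iH ξ)) = C ξ := rfl
      rw [e1, e2, e3, inner_zero_left, zero_add]
    rw [h3] at h1
    exact h1
  -- a linear section: V with G (V ξ) = C ξ
  obtain ⟨g, hg⟩ := G.rangeRestrict.exists_rightInverse_of_surjective G.range_rangeRestrict
  set V : H →ₗ[ℂ] L := g ∘ₗ (C.codRestrict (LinearMap.range G) hCmem) with hV
  have hGV : ∀ ξ : H, G (V ξ) = C ξ := by
    intro ξ
    have := congrArg (fun f => f (C.codRestrict (LinearMap.range G) hCmem ξ)) hg
    have h' : G.rangeRestrict (V ξ) = C.codRestrict (LinearMap.range G) hCmem ξ := this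
    exact congrArg Subtype.val h'
  -- key transduction equation
  have hkey : ∀ ξ : H, S ((WithLp.equiv 2 (H × L)).symm (ξ, V ξ)) =
      (WithLp.equiv 2 (H × L)).symm (A ξ + B (V ξ), V ξ) := by
    intro ξ
    have hsplit : (WithLp.equiv 2 (H × L)).symm (ξ, V ξ) = iH ξ + iL (V ξ) := by
      rw [show ((ξ, V ξ) : H × L) = (ξ, 0) + (0, V ξ) by simp]
      exact map_add (WithLp.linearEquiv 2 ℂ (H × L)).symm (ξ, (0 : L)) ((0 : H), V ξ)
    rw [hsplit, map_add, hSinH, hSinL]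
    have hDV : C ξ + D (V ξ) = V ξ := by
      have := hGV ξ
      simp only [hG, LinearMap.sub_apply, LinearMap.id_apply] at this
      rw [← this]; abel
    have : (WithLp.equiv 2 (H × L)).symm (A ξ, C ξ) + (WithLp.equiv 2 (H × L)).symm (B (V ξ), D (V ξ))
        = (WithLp.equiv 2 (H × L)).symm (A ξ + B (V ξ), C ξ + D (V ξ)) := rfl
    rw [this, hDV]
  -- the candidate map is an isometry
  have hnormT : ∀ ξ : H, ‖(A + B ∘ₗ V) ξ‖ = ‖ξ‖ := by
    intro ξ
    have h1 : ‖S ((WithLp.equiv 2 (H × L)).symm (ξ, V ξ))‖ = ‖(WithLp.equiv 2 (H × L)).symm (ξ, V ξ)‖ :=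
      S.norm_map _
    rw [hkey ξ] at h1
    have h2 := hnormE ((WithLp.equiv 2 (H × L)).symm (A ξ + B (V ξ), V ξ))
    have h3 := hnormE ((WithLp.equiv 2 (H × L)).symm (ξ, V ξ))
    have e1 : pH ((WithLp.equiv 2 (H × L)).symm (A ξ + B (V ξ), V ξ)) = A ξ + B (V ξ) := rfl
    have e2 : pL ((WithLp.equiv 2 (H × L)).symm (A ξ + B (V ξ), V ξ)) = V ξ := rfl
    have e3 : pH ((WithLp.equiv 2 (H × L)).symm (ξ, V ξ)) = ξ := rfl
    have e4 : pL ((WithLp.equiv 2 (H × L)).symm (ξ, V ξ)) = V ξ := rfl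
    rw [e1, e2] at h2
    rw [e3, e4] at h3
    have h1' : ‖(WithLp.equiv 2 (H × L)).symm (A ξ + B (V ξ), V ξ)‖ ^ 2
        = ‖(WithLp.equiv 2 (H × L)).symm (ξ, V ξ)‖ ^ 2 := by rw [h1]
    have hsq : ‖A ξ + B (V ξ)‖ ^ 2 = ‖ξ‖ ^ 2 := by linarith
    have happ : (A + B ∘ₗ V) ξ = A ξ + B (V ξ) := rfl
    rw [happ]
    exact (sq_eq_sq₀ (norm_nonneg _) (norm_nonneg _)).mp hsq
  set Tli : H →ₗᵢ[ℂ] H := ⟨A + B ∘ₗ V, hnormT⟩ with hTli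
  refine ⟨Tli.toLinearIsometryEquiv rfl, fun ξ => ⟨V ξ, ?_⟩⟩
  have hTξ : (Tli.toLinearIsometryEquiv rfl) ξ = A ξ + B (V ξ) := by
    rw [Tli.toLinearIsometryEquiv_apply]; rfl
  rw [hTξ]
  exact hkey ξ
end

section
/- In the extended graph G' of a finite bipartite weighted graph with parts A, B, initial vertex s ∈ A and marked vertex t ∈ B, let v₀ = Σ_{e∈E} √(w_e) |e⟩. Then R_A(|ss'⟩ + v₀ − |t't⟩) = −|ss'⟩ − v₀ − |t't⟩ and R_B(−|ss'⟩ − v₀ − |t't⟩) = −|ss'⟩ + v₀ + |t't⟩; in particular, one step U = R_B R_A of the quantum walk maps |ss'⟩ + v₀ − |t't⟩ to −|ss'⟩ + v₀ + |t't⟩. -/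
/-!
**Statement 4.**
In the extended graph `G'` of a finite bipartite weighted graph with parts `A, B`,
initial vertex `s ∈ A` and marked vertex `t ∈ B`, let `v₀ = ∑_{e ∈ E} √(w e) |e⟩`.
Then `R_A (|ss'⟩ + v₀ − |t't⟩) = −|ss'⟩ − v₀ − |t't⟩` and
`R_B (−|ss'⟩ − v₀ − |t't⟩) = −|ss'⟩ + v₀ + |t't⟩`; in particular one step `U = R_B R_A`
of the quantum walk maps `|ss'⟩ + v₀ − |t't⟩` to `−|ss'⟩ + v₀ + |t't⟩`.

The walk space is `EuclideanSpace ℂ (E ⊕ Bool)` (`Sum.inr false = ss'`, `Sum.inr true = t't`).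
`R_A` is the unitary acting as `−1` on the span of the star states `{ψ_u : u ∈ A}` and as the
identity on its orthogonal complement; it is specified here by these two defining properties
(and similarly for `R_B`).
-/

noncomputable section

namespace Stmt4

variable {V E : Type*} [Fintype V] [Fintype E] [DecidableEq V] [DecidableEq E]

def ket (x : E ⊕ Bool) : EuclideanSpace ℂ (E ⊕ Bool) := EuclideanSpace.single x 1

def psiA (endA : E → V) (w : E → ℝ) (s : V) (u : V) : EuclideanSpace ℂ (E ⊕ Bool) :=
  (∑ e ∈ Finset.univ.filter (fun e => endA e = u),
      ((Real.sqrt (w e) : ℂ) • ket (Sum.inl e))) +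
    (if u = s then ket (Sum.inr false) else 0)

def psiB (endB : E → V) (w : E → ℝ) (t : V) (u : V) : EuclideanSpace ℂ (E ⊕ Bool) :=
  (∑ e ∈ Finset.univ.filter (fun e => endB e = u),
      ((Real.sqrt (w e) : ℂ) • ket (Sum.inl e))) +
    (if u = t then ket (Sum.inr true) else 0)

/-- `v₀`, the weighted sum of the original edges. -/
def v₀ (w : E → ℝ) : EuclideanSpace ℂ (E ⊕ Bool) :=
  ∑ e : E, ((Real.sqrt (w e) : ℂ) • ket (Sum.inl e))


lemma inner_psiA_ket_true (endA : E → V) (w : E → ℝ) (s u : V) :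
    (inner ℂ (psiA endA w s u) (ket (Sum.inr true)) : ℂ) = 0 := by
  unfold psiA ket
  rw [inner_add_left, sum_inner]
  have h1 : ∀ e : E,
      (inner ℂ (((Real.sqrt (w e) : ℂ) • EuclideanSpace.single (Sum.inl e : E ⊕ Bool) (1:ℂ)))
        (EuclideanSpace.single (Sum.inr true : E ⊕ Bool) (1:ℂ)) : ℂ) = 0 := by
    intro e
    rw [inner_smul_left, EuclideanSpace.inner_single_left]
    simp
  rw [Finset.sum_eq_zero (fun e _ => h1 e)]
  rcases eq_or_ne u s with h | h
  · subst h
    simp [EuclideanSpace.inner_single_left, EuclideanSpace.single_apply]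
  · simp [h]

lemma inner_psiB_ket_false (endB : E → V) (w : E → ℝ) (t u : V) :
    (inner ℂ (psiB endB w t u) (ket (Sum.inr false)) : ℂ) = 0 := by
  unfold psiB ket
  rw [inner_add_left, sum_inner]
  have h1 : ∀ e : E,
      (inner ℂ (((Real.sqrt (w e) : ℂ) • EuclideanSpace.single (Sum.inl e : E ⊕ Bool) (1:ℂ)))
        (EuclideanSpace.single (Sum.inr false : E ⊕ Bool) (1:ℂ)) : ℂ) = 0 := by
    intro e
    rw [inner_smul_left, EuclideanSpace.inner_single_left]
    simp
  rw [Finset.sum_eq_zero (fun e _ => h1 e)]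
  rcases eq_or_ne u t with h | h
  · subst h
    simp [EuclideanSpace.inner_single_left, EuclideanSpace.single_apply]
  · simp [h]

lemma sum_psiA (A : Finset V) (endA : E → V) (hA : ∀ e, endA e ∈ A) (w : E → ℝ)
    (s : V) (hs : s ∈ A) :
    ∑ u ∈ A, psiA endA w s u = v₀ w + ket (Sum.inr false) := by
  unfold psiA v₀
  rw [Finset.sum_add_distrib]
  congr 1
  · exact Finset.sum_fiberwise_of_maps_to (fun e _ => hA e) _
  · simp [Finset.sum_ite_eq' A s, hs]

lemma sum_psiB (B : Finset V) (endB : E → V) (hB : ∀ e, endB e ∈ B) (w : E → ℝ)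
    (t : V) (ht : t ∈ B) :
    ∑ u ∈ B, psiB endB w t u = v₀ w + ket (Sum.inr true) := by
  unfold psiB v₀
  rw [Finset.sum_add_distrib]
  congr 1
  · exact Finset.sum_fiberwise_of_maps_to (fun e _ => hB e) _
  · simp [Finset.sum_ite_eq' B t, ht]

theorem walk_step_on_edge_sum
    (A B : Finset V) (hAB : Disjoint A B)
    (endA endB : E → V) (hA : ∀ e, endA e ∈ A) (hB : ∀ e, endB e ∈ B)
    (w : E → ℝ) (hw : ∀ e, 0 < w e)
    (s t : V) (hs : s ∈ A) (ht : t ∈ B)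
    (RA RB : EuclideanSpace ℂ (E ⊕ Bool) →ₗ[ℂ] EuclideanSpace ℂ (E ⊕ Bool))
    (hRAneg : ∀ u ∈ A, RA (psiA endA w s u) = -psiA endA w s u)
    (hRAid : ∀ x, (∀ u ∈ A, (inner ℂ (psiA endA w s u) x : ℂ) = 0) → RA x = x)
    (hRBneg : ∀ u ∈ B, RB (psiB endB w t u) = -psiB endB w t u)
    (hRBid : ∀ x, (∀ u ∈ B, (inner ℂ (psiB endB w t u) x : ℂ) = 0) → RB x = x) :
    RA (ket (Sum.inr false) + v₀ w - ket (Sum.inr true))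
        = -ket (Sum.inr false) - v₀ w - ket (Sum.inr true) ∧
    RB (-ket (Sum.inr false) - v₀ w - ket (Sum.inr true))
        = -ket (Sum.inr false) + v₀ w + ket (Sum.inr true) ∧
    RB (RA (ket (Sum.inr false) + v₀ w - ket (Sum.inr true)))
        = -ket (Sum.inr false) + v₀ w + ket (Sum.inr true) := by

  have hsA := sum_psiA A endA hA w s hs
  have hsB := sum_psiB B endB hB w t ht
  have hRAsum : RA (∑ u ∈ A, psiA endA w s u) = -(∑ u ∈ A, psiA endA w s u) := by
    rw [map_sum, ← Finset.sum_neg_distrib]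
    exact Finset.sum_congr rfl hRAneg
  have hRBsum : RB (∑ u ∈ B, psiB endB w t u) = -(∑ u ∈ B, psiB endB w t u) := by
    rw [map_sum, ← Finset.sum_neg_distrib]
    exact Finset.sum_congr rfl hRBneg
  have hRAt : RA (ket (Sum.inr true)) = ket (Sum.inr true) :=
    hRAid _ (fun u _ => inner_psiA_ket_true endA w s u)
  have hRBf : RB (ket (Sum.inr false)) = ket (Sum.inr false) :=
    hRBid _ (fun u _ => inner_psiB_ket_false endB w t u)
  have h1 : RA (ket (Sum.inr false) + v₀ w - ket (Sum.inr true))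
      = -ket (Sum.inr false) - v₀ w - ket (Sum.inr true) := by
    have : ket (Sum.inr false) + v₀ w - ket (Sum.inr true)
        = (∑ u ∈ A, psiA endA w s u) - ket (Sum.inr true) := by rw [hsA]; abel
    rw [this, map_sub, hRAsum, hRAt, hsA]
    abel
  have h2 : RB (-ket (Sum.inr false) - v₀ w - ket (Sum.inr true))
      = -ket (Sum.inr false) + v₀ w + ket (Sum.inr true) := by
    have : -ket (Sum.inr false) - v₀ w - ket (Sum.inr true)
        = -ket (Sum.inr false) - (∑ u ∈ B, psiB endB w t u) := by rw [hsB]; abel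
    rw [this, map_sub, map_neg, hRBf, hRBsum, hsB]
    abel
  exact ⟨h1, h2, by rw [h1, h2]⟩


end Stmt4
end
end

section
/- In the extended graph G' of a finite bipartite weighted graph with parts A, B, initial vertex s ∈ A and marked vertex t ∈ B, let p = (p_e)_{e∈E} be a unit flow from s to t, and let v₁ = Σ_{e∈E} (p_e/√(w_e)) |e⟩. Then the vector −|ss'⟩ + v₁ − |t't⟩ is orthogonal to ψ_u for every u ∈ A ∪ B; consequently it is fixed by both R_A and R_B, and hence by U = R_B R_A. -/
/-!
**Statement 5.**
In the extended graph `G'` of a finite bipartite weighted graph with parts `A, B`,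
initial vertex `s ∈ A` and marked vertex `t ∈ B`, let `p` be a unit flow from `s` to `t`
and `v₁ = ∑_{e ∈ E} (p e / √(w e)) |e⟩`.  Then `−|ss'⟩ + v₁ − |t't⟩` is orthogonal to every
star state `ψ_u` (`u ∈ A ∪ B`); consequently it is fixed by `R_A`, by `R_B`, and by
`U = R_B R_A`.

The walk space is `EuclideanSpace ℂ (E ⊕ Bool)` (`Sum.inr false = ss'`, `Sum.inr true = t't`).
`R_A` is the unitary acting as `−1` on the span of `{ψ_u : u ∈ A}` and as the identity on its
orthogonal complement, specified by its defining properties (similarly `R_B`).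
-/

noncomputable section

namespace Stmt5

variable {V E : Type*} [Fintype V] [Fintype E] [DecidableEq V] [DecidableEq E]

def ket (x : E ⊕ Bool) : EuclideanSpace ℂ (E ⊕ Bool) := EuclideanSpace.single x 1

def psiA (endA : E → V) (w : E → ℝ) (s : V) (u : V) : EuclideanSpace ℂ (E ⊕ Bool) :=
  (∑ e ∈ Finset.univ.filter (fun e => endA e = u),
      ((Real.sqrt (w e) : ℂ) • ket (Sum.inl e))) +
    (if u = s then ket (Sum.inr false) else 0)

def psiB (endB : E → V) (w : E → ℝ) (t : V) (u : V) : EuclideanSpace ℂ (E ⊕ Bool) :=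
  (∑ e ∈ Finset.univ.filter (fun e => endB e = u),
      ((Real.sqrt (w e) : ℂ) • ket (Sum.inl e))) +
    (if u = t then ket (Sum.inr true) else 0)

/-- `v₁`, the state corresponding to the flow `p`. -/
def v₁ (w : E → ℝ) (p : E → ℝ) : EuclideanSpace ℂ (E ⊕ Bool) :=
  ∑ e : E, (((p e / Real.sqrt (w e) : ℝ) : ℂ) • ket (Sum.inl e))

lemma inner_ket_ket (x y : E ⊕ Bool) : (inner ℂ (ket x) (ket y) : ℂ) = if x = y then 1 else 0 := by
  simp [ket, EuclideanSpace.inner_single_left, EuclideanSpace.single_apply, eq_comm]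

lemma inner_ket_v (w : E → ℝ) (p : E → ℝ) (x : E ⊕ Bool) :
    (inner ℂ (ket x) (-ket (Sum.inr false) + v₁ w p - ket (Sum.inr true)) : ℂ)
      = Sum.elim (fun e => ((p e / Real.sqrt (w e) : ℝ) : ℂ)) (fun _ => -1) x := by
  rw [inner_sub_right, inner_add_right, inner_neg_right, v₁, inner_sum]
  simp only [inner_smul_right, inner_ket_ket]
  cases x with
  | inl e =>
    rw [Finset.sum_eq_single e]
    · simp
    · intro b _ hb; simp [hb.symm]
    · simp
  | inr b =>
    have : ∀ e : E, ((p e / Real.sqrt (w e) : ℝ) : ℂ) *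
        (if (Sum.inr b : E ⊕ Bool) = Sum.inl e then 1 else 0) = 0 := by
      intro e; simp
    rw [Finset.sum_congr rfl (fun e _ => this e), Finset.sum_const_zero]
    cases b <;> simp

lemma inner_psi (w : E → ℝ) (hw : ∀ e, 0 < w e) (p : E → ℝ) (S : Finset E) (b : Bool)
    (c : Prop) [Decidable c] :
    (inner ℂ ((∑ e ∈ S, ((Real.sqrt (w e) : ℂ) • ket (Sum.inl e))) + (if c then ket (Sum.inr b) else 0))
        (-ket (Sum.inr false) + v₁ w p - ket (Sum.inr true)) : ℂ)
      = ((∑ e ∈ S, p e : ℝ) : ℂ) - (if c then 1 else 0) := by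
  rw [inner_add_left, sum_inner]
  simp only [inner_smul_left, inner_ket_v, Sum.elim_inl]
  have h1 : ∀ e ∈ S, (starRingEnd ℂ) ((Real.sqrt (w e) : ℂ)) *
      ((p e / Real.sqrt (w e) : ℝ) : ℂ) = ((p e : ℝ) : ℂ) := by
    intro e _
    have hne : (Real.sqrt (w e) : ℂ) ≠ 0 := by
      exact Complex.ofReal_ne_zero.2 (Real.sqrt_ne_zero'.2 (hw e))
    rw [Complex.conj_ofReal]
    push_cast
    field_simp
  rw [Finset.sum_congr rfl h1]
  by_cases hc : c
  · rw [if_pos hc, if_pos hc, inner_ket_v, Sum.elim_inr]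
    push_cast; ring
  · rw [if_neg hc, if_neg hc, inner_zero_left]
    push_cast; ring

theorem flow_state_fixed
    (A B : Finset V) (hAB : Disjoint A B)
    (endA endB : E → V) (hA : ∀ e, endA e ∈ A) (hB : ∀ e, endB e ∈ B)
    (w : E → ℝ) (hw : ∀ e, 0 < w e)
    (s t : V) (hs : s ∈ A) (ht : t ∈ B)
    (p : E → ℝ)
    (hpA : ∀ u ∈ A, ∑ e ∈ Finset.univ.filter (fun e => endA e = u), p e
        = if u = s then 1 else 0)
    (hpB : ∀ u ∈ B, ∑ e ∈ Finset.univ.filter (fun e => endB e = u), p e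
        = if u = t then 1 else 0)
    (RA RB : EuclideanSpace ℂ (E ⊕ Bool) →ₗ[ℂ] EuclideanSpace ℂ (E ⊕ Bool))
    (hRAneg : ∀ u ∈ A, RA (psiA endA w s u) = -psiA endA w s u)
    (hRAid : ∀ x, (∀ u ∈ A, (inner ℂ (psiA endA w s u) x : ℂ) = 0) → RA x = x)
    (hRBneg : ∀ u ∈ B, RB (psiB endB w t u) = -psiB endB w t u)
    (hRBid : ∀ x, (∀ u ∈ B, (inner ℂ (psiB endB w t u) x : ℂ) = 0) → RB x = x) :
    (∀ u ∈ A, (inner ℂ (psiA endA w s u)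
        (-ket (Sum.inr false) + v₁ w p - ket (Sum.inr true)) : ℂ) = 0) ∧
    (∀ u ∈ B, (inner ℂ (psiB endB w t u)
        (-ket (Sum.inr false) + v₁ w p - ket (Sum.inr true)) : ℂ) = 0) ∧
    RA (-ket (Sum.inr false) + v₁ w p - ket (Sum.inr true))
        = -ket (Sum.inr false) + v₁ w p - ket (Sum.inr true) ∧
    RB (-ket (Sum.inr false) + v₁ w p - ket (Sum.inr true))
        = -ket (Sum.inr false) + v₁ w p - ket (Sum.inr true) ∧
    RB (RA (-ket (Sum.inr false) + v₁ w p - ket (Sum.inr true)))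
        = -ket (Sum.inr false) + v₁ w p - ket (Sum.inr true) := by
  have hAorth : ∀ u ∈ A, (inner ℂ (psiA endA w s u)
      (-ket (Sum.inr false) + v₁ w p - ket (Sum.inr true)) : ℂ) = 0 := by
    intro u hu
    rw [psiA, inner_psi w hw p _ false (u = s), hpA u hu]
    by_cases h : u = s <;> simp [h]
  have hBorth : ∀ u ∈ B, (inner ℂ (psiB endB w t u)
      (-ket (Sum.inr false) + v₁ w p - ket (Sum.inr true)) : ℂ) = 0 := by
    intro u hu
    rw [psiB, inner_psi w hw p _ true (u = t), hpB u hu]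
    by_cases h : u = t <;> simp [h]
  have hRA := hRAid _ hAorth
  have hRB := hRBid _ hBorth
  exact ⟨hAorth, hBorth, hRA, hRB, by rw [hRA, hRB]⟩


end Stmt5
end
end

section
/- Let G be a finite bipartite weighted graph with parts A, B, initial vertex s ∈ A and marked vertex t ∈ B, with total weight W = Σ_{e∈E} w_e, and let p be a unit flow from s to t with energy R = Σ_{e∈E} p_e²/w_e. Then there exists a vector v in the span of {|e⟩ : e ∈ E} such that U(|ss'⟩ + v) = |t't⟩ + v, where U = R_B R_A is one step of the quantum walk on the extended graph G', and ‖v‖² ≤ (W + R)/2. In particular, U transduces |ss'⟩ into |t't⟩ with transduction complexity at most (W + R_{s,t})/2, where R_{s,t} is the minimum energy over all unit flows from s to t (the effective resistance). -/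
/-!
**Statement 6.**
Let `G` be a finite bipartite weighted graph with parts `A, B`, initial vertex `s ∈ A` and
marked vertex `t ∈ B`, total weight `W = ∑_{e ∈ E} w e`, and let `p` be a unit flow from `s`
to `t` with energy `R = ∑_{e ∈ E} (p e)² / w e`.  Then there exists a vector `v` in the span
of the original edge states `{|e⟩ : e ∈ E}` such that `U (|ss'⟩ + v) = |t't⟩ + v`, where
`U = R_B R_A` is one step of the quantum walk on the extended graph `G'`, and
`‖v‖² ≤ (W + R) / 2`.  (In particular, `U` transduces `|ss'⟩` into `|t't⟩` with transduction
complexity at most `(W + R_{s,t}) / 2`, `R_{s,t}` being the minimal energy, i.e. the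
effective resistance.)

The walk space is `EuclideanSpace ℂ (E ⊕ Bool)` (`Sum.inr false = ss'`, `Sum.inr true = t't`).
`R_A` is the unitary acting as `−1` on the span of the star states `{ψ_u : u ∈ A}` and as the
identity on its orthogonal complement, specified by its defining properties (similarly `R_B`).
-/

noncomputable section

namespace Stmt6

variable {V E : Type*} [Fintype V] [Fintype E] [DecidableEq V] [DecidableEq E]

def ket (x : E ⊕ Bool) : EuclideanSpace ℂ (E ⊕ Bool) := EuclideanSpace.single x 1

def psiA (endA : E → V) (w : E → ℝ) (s : V) (u : V) : EuclideanSpace ℂ (E ⊕ Bool) :=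
  (∑ e ∈ Finset.univ.filter (fun e => endA e = u),
      ((Real.sqrt (w e) : ℂ) • ket (Sum.inl e))) +
    (if u = s then ket (Sum.inr false) else 0)

def psiB (endB : E → V) (w : E → ℝ) (t : V) (u : V) : EuclideanSpace ℂ (E ⊕ Bool) :=
  (∑ e ∈ Finset.univ.filter (fun e => endB e = u),
      ((Real.sqrt (w e) : ℂ) • ket (Sum.inl e))) +
    (if u = t then ket (Sum.inr true) else 0)

set_option linter.unusedSectionVars false

lemma inner_ket_left (i : E ⊕ Bool) (x : EuclideanSpace ℂ (E ⊕ Bool)) :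
    (inner ℂ (ket (E := E) i) x : ℂ) = x i := by
  simp [ket, EuclideanSpace.inner_single_left]

lemma inner_psiA (endA : E → V) (w : E → ℝ) (s : V) (u : V)
    (x : EuclideanSpace ℂ (E ⊕ Bool)) :
    (inner ℂ (psiA endA w s u) x : ℂ) =
      (∑ e ∈ Finset.univ.filter (fun e => endA e = u),
        (Real.sqrt (w e) : ℂ) * x (Sum.inl e)) +
      (if u = s then x (Sum.inr false) else 0) := by
  simp only [psiA, inner_add_left, sum_inner, inner_smul_left, inner_ket_left,
    Complex.conj_ofReal, apply_ite (fun y : EuclideanSpace ℂ (E ⊕ Bool) => (inner ℂ y x : ℂ)),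
    inner_zero_left]

lemma inner_psiB (endB : E → V) (w : E → ℝ) (t : V) (u : V)
    (x : EuclideanSpace ℂ (E ⊕ Bool)) :
    (inner ℂ (psiB endB w t u) x : ℂ) =
      (∑ e ∈ Finset.univ.filter (fun e => endB e = u),
        (Real.sqrt (w e) : ℂ) * x (Sum.inl e)) +
      (if u = t then x (Sum.inr true) else 0) := by
  simp only [psiB, inner_add_left, sum_inner, inner_smul_left, inner_ket_left,
    Complex.conj_ofReal, apply_ite (fun y : EuclideanSpace ℂ (E ⊕ Bool) => (inner ℂ y x : ℂ)),
    inner_zero_left]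

theorem electric_walk_transduction
    (A B : Finset V) (hAB : Disjoint A B)
    (endA endB : E → V) (hA : ∀ e, endA e ∈ A) (hB : ∀ e, endB e ∈ B)
    (w : E → ℝ) (hw : ∀ e, 0 < w e)
    (s t : V) (hs : s ∈ A) (ht : t ∈ B)
    (p : E → ℝ)
    (hpA : ∀ u ∈ A, ∑ e ∈ Finset.univ.filter (fun e => endA e = u), p e
        = if u = s then 1 else 0)
    (hpB : ∀ u ∈ B, ∑ e ∈ Finset.univ.filter (fun e => endB e = u), p e
        = if u = t then 1 else 0)
    (RA RB : EuclideanSpace ℂ (E ⊕ Bool) →ₗ[ℂ] EuclideanSpace ℂ (E ⊕ Bool))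
    (hRAneg : ∀ u ∈ A, RA (psiA endA w s u) = -psiA endA w s u)
    (hRAid : ∀ x, (∀ u ∈ A, (inner ℂ (psiA endA w s u) x : ℂ) = 0) → RA x = x)
    (hRBneg : ∀ u ∈ B, RB (psiB endB w t u) = -psiB endB w t u)
    (hRBid : ∀ x, (∀ u ∈ B, (inner ℂ (psiB endB w t u) x : ℂ) = 0) → RB x = x) :
    ∃ v ∈ Submodule.span ℂ
        (Set.range (fun e : E => ket (Sum.inl e) : E → EuclideanSpace ℂ (E ⊕ Bool))),
      RB (RA (ket (Sum.inr false) + v)) = ket (Sum.inr true) + v ∧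
      ‖v‖ ^ 2 ≤ ((∑ e : E, w e) + ∑ e : E, (p e) ^ 2 / w e) / 2 := by
  have hw0 : ∀ e, (0:ℝ) ≤ w e := fun e => (hw e).le
  have hsq : ∀ e, Real.sqrt (w e) ≠ 0 := fun e => (Real.sqrt_pos.mpr (hw e)).ne'
  set c : E → ℝ := fun e => (w e - p e) / (2 * Real.sqrt (w e)) with hc
  set v : EuclideanSpace ℂ (E ⊕ Bool) :=
    ∑ e : E, ((c e : ℂ) • ket (Sum.inl e)) with hv
  refine ⟨v, ?_, ?_, ?_⟩
  · exact Submodule.sum_mem _ fun e _ =>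
      Submodule.smul_mem _ _ (Submodule.subset_span ⟨e, rfl⟩)
  · -- coordinates of v
    have hvl : ∀ e : E, v (Sum.inl e) = (c e : ℂ) := by
      intro e
      rw [← inner_ket_left (Sum.inl e) v]
      simp [hv, inner_sum, inner_smul_right, inner_ket_left, ket,
        EuclideanSpace.single_apply, EuclideanSpace.inner_single_left]
    have hvr : ∀ b : Bool, v (Sum.inr b) = 0 := by
      intro b
      rw [← inner_ket_left (Sum.inr b) v]
      simp [hv, inner_sum, inner_smul_right, inner_ket_left, ket,
        EuclideanSpace.single_apply, EuclideanSpace.inner_single_left]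
    -- the common edge part
    set Sig : EuclideanSpace ℂ (E ⊕ Bool) :=
      ∑ e : E, ((Real.sqrt (w e) : ℂ) • ket (Sum.inl e)) with hSig
    have hSigl : ∀ e : E, Sig (Sum.inl e) = (Real.sqrt (w e) : ℂ) := by
      intro e
      rw [← inner_ket_left (Sum.inl e) Sig]
      simp [hSig, inner_sum, inner_smul_right, inner_ket_left, ket,
        EuclideanSpace.single_apply, EuclideanSpace.inner_single_left]
    have hSigr : ∀ b : Bool, Sig (Sum.inr b) = 0 := by
      intro b
      rw [← inner_ket_left (Sum.inr b) Sig]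
      simp [hSig, inner_sum, inner_smul_right, inner_ket_left, ket,
        EuclideanSpace.single_apply, EuclideanSpace.inner_single_left]
    set SA : EuclideanSpace ℂ (E ⊕ Bool) := ∑ u ∈ A, psiA endA w s u with hSA
    set SB : EuclideanSpace ℂ (E ⊕ Bool) := ∑ u ∈ B, psiB endB w t u with hSB
    have hSAeq : SA = Sig + ket (Sum.inr false) := by
      rw [hSA]
      simp only [psiA, Finset.sum_add_distrib]
      rw [Finset.sum_fiberwise_of_maps_to (fun e _ => hA e), Finset.sum_ite_eq' A s]
      simp [hs, hSig]
    have hSBeq : SB = Sig + ket (Sum.inr true) := by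
      rw [hSB]
      simp only [psiB, Finset.sum_add_distrib]
      rw [Finset.sum_fiberwise_of_maps_to (fun e _ => hB e), Finset.sum_ite_eq' B t]
      simp [ht, hSig]
    have hketl : ∀ (b : Bool) (e : E), ket (E := E) (Sum.inr b) (Sum.inl e) = 0 := by
      intro b e; simp [ket, EuclideanSpace.single_apply]
    have hketr : ∀ (b b' : Bool),
        ket (E := E) (Sum.inr b) (Sum.inr b') = if b' = b then 1 else 0 := by
      intro b b'; simp [ket, EuclideanSpace.single_apply]
    -- key scalar identity
    have hkey : ∀ e : E,
        (Real.sqrt (w e) : ℂ) * ((c e : ℂ) - (2⁻¹ : ℂ) * (Real.sqrt (w e) : ℂ))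
          = -(p e : ℂ) / 2 := by
      intro e
      have h1 : Real.sqrt (w e) * (c e - 2⁻¹ * Real.sqrt (w e)) = -(p e) / 2 := by
        have h2 : Real.sqrt (w e) * Real.sqrt (w e) = w e := Real.mul_self_sqrt (hw0 e)
        rw [hc]
        field_simp [hsq e]
        linear_combination (-1) * h2
      have h1c : ((Real.sqrt (w e) * (c e - 2⁻¹ * Real.sqrt (w e)) : ℝ) : ℂ)
          = ((-p e / 2 : ℝ) : ℂ) := Complex.ofReal_inj.mpr h1
      push_cast at h1c
      linear_combination h1c
    -- alpha
    set α : EuclideanSpace ℂ (E ⊕ Bool) :=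
      ket (Sum.inr false) + v - (2⁻¹ : ℂ) • SA with hα
    have hαortho : ∀ u ∈ A, (inner ℂ (psiA endA w s u) α : ℂ) = 0 := by
      intro u hu
      rw [inner_psiA]
      have hal : ∀ e : E, α (Sum.inl e)
          = (c e : ℂ) - (2⁻¹ : ℂ) * (Real.sqrt (w e) : ℂ) := by
        intro e
        simp [hα, hSAeq, PiLp.sub_apply, PiLp.add_apply, PiLp.smul_apply,
          hvl, hSigl, hketl, smul_eq_mul]
      have haf : α (Sum.inr false) = (2⁻¹ : ℂ) := by
        simp [hα, hSAeq, PiLp.sub_apply, PiLp.add_apply, PiLp.smul_apply,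
          hvr, hSigr, hketr, smul_eq_mul]
        norm_num
      rw [haf]
      calc (∑ e ∈ Finset.univ.filter (fun e => endA e = u),
              (Real.sqrt (w e) : ℂ) * α (Sum.inl e)) + (if u = s then (2⁻¹:ℂ) else 0)
          = (∑ e ∈ Finset.univ.filter (fun e => endA e = u), (-(p e : ℂ) / 2))
              + (if u = s then (2⁻¹:ℂ) else 0) := by
            rw [Finset.sum_congr rfl fun e _ => by rw [hal e, hkey e]]
        _ = 0 := by
            have := hpA u hu
            have h3 : (∑ e ∈ Finset.univ.filter (fun e => endA e = u), (p e : ℂ))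
                = (if u = s then (1:ℂ) else 0) := by
              have h4 := congrArg (fun r : ℝ => (r : ℂ)) this
              push_cast [apply_ite (fun r : ℝ => (r : ℂ))] at h4
              simpa using h4
            rw [Finset.sum_congr rfl (fun e _ => by rw [neg_div]), Finset.sum_neg_distrib,
              ← Finset.sum_div, h3]
            by_cases hus : u = s <;> simp [hus]
    have hRAα : RA α = α := hRAid α hαortho
    have hRASA : RA SA = -SA := by
      rw [hSA, map_sum]
      rw [Finset.sum_congr rfl fun u hu => hRAneg u hu]
      simp
    have step1 : RA (ket (Sum.inr false) + v) = v - Sig := by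
      have hdecomp : ket (Sum.inr false) + v = α + (2⁻¹ : ℂ) • SA := by
        rw [hα]; module
      rw [hdecomp, map_add, hRAα, map_smul, hRASA, hα, hSAeq]
      module
    -- gamma
    set γ : EuclideanSpace ℂ (E ⊕ Bool) :=
      ket (Sum.inr true) + v - (2⁻¹ : ℂ) • SB with hγ
    have hγortho : ∀ u ∈ B, (inner ℂ (psiB endB w t u) γ : ℂ) = 0 := by
      intro u hu
      rw [inner_psiB]
      have hgl : ∀ e : E, γ (Sum.inl e)
          = (c e : ℂ) - (2⁻¹ : ℂ) * (Real.sqrt (w e) : ℂ) := by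
        intro e
        simp [hγ, hSBeq, PiLp.sub_apply, PiLp.add_apply, PiLp.smul_apply,
          hvl, hSigl, hketl, smul_eq_mul]
      have hgt : γ (Sum.inr true) = (2⁻¹ : ℂ) := by
        simp [hγ, hSBeq, PiLp.sub_apply, PiLp.add_apply, PiLp.smul_apply,
          hvr, hSigr, hketr, smul_eq_mul]
        norm_num
      rw [hgt]
      calc (∑ e ∈ Finset.univ.filter (fun e => endB e = u),
              (Real.sqrt (w e) : ℂ) * γ (Sum.inl e)) + (if u = t then (2⁻¹:ℂ) else 0)
          = (∑ e ∈ Finset.univ.filter (fun e => endB e = u), (-(p e : ℂ) / 2))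
              + (if u = t then (2⁻¹:ℂ) else 0) := by
            rw [Finset.sum_congr rfl fun e _ => by rw [hgl e, hkey e]]
        _ = 0 := by
            have := hpB u hu
            have h3 : (∑ e ∈ Finset.univ.filter (fun e => endB e = u), (p e : ℂ))
                = (if u = t then (1:ℂ) else 0) := by
              have h4 := congrArg (fun r : ℝ => (r : ℂ)) this
              push_cast [apply_ite (fun r : ℝ => (r : ℂ))] at h4
              simpa using h4
            rw [Finset.sum_congr rfl (fun e _ => by rw [neg_div]), Finset.sum_neg_distrib,
              ← Finset.sum_div, h3]
            by_cases hut : u = t <;> simp [hut]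
    have hRBγ : RB γ = γ := hRBid γ hγortho
    have hRBSB : RB SB = -SB := by
      rw [hSB, map_sum]
      rw [Finset.sum_congr rfl fun u hu => hRBneg u hu]
      simp
    have hdec2 : v - Sig = γ - (2⁻¹ : ℂ) • SB := by
      rw [hγ, hSBeq]; module
    rw [step1, hdec2, map_sub, hRBγ, map_smul, hRBSB, hγ, hSBeq]
    module
  · -- norm bound
    have hvl : ∀ e : E, v (Sum.inl e) = (c e : ℂ) := by
      intro e
      rw [← inner_ket_left (Sum.inl e) v]
      simp [hv, inner_sum, inner_smul_right, inner_ket_left, ket,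
        EuclideanSpace.single_apply, EuclideanSpace.inner_single_left]
    have hvr : ∀ b : Bool, v (Sum.inr b) = 0 := by
      intro b
      rw [← inner_ket_left (Sum.inr b) v]
      simp [hv, inner_sum, inner_smul_right, inner_ket_left, ket,
        EuclideanSpace.single_apply, EuclideanSpace.inner_single_left]
    have hnorm : ‖v‖ ^ 2 = ∑ e : E, (c e) ^ 2 := by
      rw [EuclideanSpace.norm_eq, Real.sq_sqrt (by positivity)]
      rw [Fintype.sum_sum_type]
      simp [hvl, hvr, Complex.norm_real, sq_abs]
    rw [hnorm]
    have hrhs : ((∑ e : E, w e) + ∑ e : E, (p e) ^ 2 / w e) / 2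
        = ∑ e : E, (w e / 2 + p e ^ 2 / w e / 2) := by
      rw [Finset.sum_add_distrib, ← Finset.sum_div, ← Finset.sum_div]
      ring
    rw [hrhs]
    refine Finset.sum_le_sum fun e _ => ?_
    have h2 : Real.sqrt (w e) * Real.sqrt (w e) = w e := Real.mul_self_sqrt (hw0 e)
    have hwpos := hw e
    have hcval : c e ^ 2 = (w e - p e) ^ 2 / (4 * w e) := by
      rw [hc]
      rw [div_pow]
      congr 1
      rw [mul_pow]
      nlinarith [h2]
    rw [hcval]
    rw [div_le_iff₀ (by positivity)]
    have hexp : (w e / 2 + p e ^ 2 / w e / 2) * (4 * w e)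
        = 2 * w e ^ 2 + 2 * p e ^ 2 := by
      field_simp
      ring
    rw [hexp]
    nlinarith [sq_nonneg (w e + p e)]

end Stmt6
end
end

section
/- Let G be a finite bipartite weighted graph with parts A, B, initial vertex s ∈ A and marked vertex t ∈ B, total weight W = Σ_{e∈E} w_e, and let p be a unit flow from s to t with energy R = Σ_{e∈E} p_e²/w_e, where W, R > 0. Let α = √(R/W), and let αG be the graph G with every edge weight w_e replaced by α·w_e (the dangling edges of the extension keep weight 1). Then there exists a vector v in the span of {|e⟩ : e ∈ E} with ‖v‖² ≤ √(W·R) such that U_α(|ss'⟩ + v) = |t't⟩ + v, where U_α = R_B R_A is one step of the quantum walk on the extended graph (αG)'. -/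
set_option linter.unusedSectionVars false
set_option maxHeartbeats 1000000


/-!
**Statement 7.**
Let `G` be a finite bipartite weighted graph with parts `A, B`, initial vertex `s ∈ A`,
marked vertex `t ∈ B`, total weight `W = ∑ w e > 0`, and `p` a unit flow from `s` to `t`
with energy `R = ∑ (p e)² / w e > 0`.  Let `α = √(R / W)` and let `αG` be `G` with each edge
weight `w e` replaced by `α * w e` (the dangling edges keep weight 1).  Then there is a
vector `v` in the span of `{|e⟩ : e ∈ E}` with `‖v‖² ≤ √(W · R)` such that
`U_α (|ss'⟩ + v) = |t't⟩ + v`, where `U_α = R_B R_A` is one step of the quantum walk on the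
extended graph `(αG)'`.

The walk space is `EuclideanSpace ℂ (E ⊕ Bool)` (`Sum.inr false = ss'`, `Sum.inr true = t't`).
The star states of `(αG)'` use the rescaled weights `fun e => α * w e`; `R_A` is the unitary
acting as `−1` on the span of `{ψ_u : u ∈ A}` and as the identity on its orthogonal
complement, specified by its defining properties (similarly `R_B`).
-/

noncomputable section

namespace Stmt7

variable {V E : Type*} [Fintype V] [Fintype E] [DecidableEq V] [DecidableEq E]

def ket (x : E ⊕ Bool) : EuclideanSpace ℂ (E ⊕ Bool) := EuclideanSpace.single x 1

def psiA (endA : E → V) (w : E → ℝ) (s : V) (u : V) : EuclideanSpace ℂ (E ⊕ Bool) :=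
  (∑ e ∈ Finset.univ.filter (fun e => endA e = u),
      ((Real.sqrt (w e) : ℂ) • ket (Sum.inl e))) +
    (if u = s then ket (Sum.inr false) else 0)

def psiB (endB : E → V) (w : E → ℝ) (t : V) (u : V) : EuclideanSpace ℂ (E ⊕ Bool) :=
  (∑ e ∈ Finset.univ.filter (fun e => endB e = u),
      ((Real.sqrt (w e) : ℂ) • ket (Sum.inl e))) +
    (if u = t then ket (Sum.inr true) else 0)

lemma inner_ket_ket (x y : E ⊕ Bool) :
    (inner ℂ (ket (E := E) x) (ket y) : ℂ) = if y = x then 1 else 0 := by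
  simp [ket, EuclideanSpace.inner_single_left, EuclideanSpace.single_apply]
  exact if_congr eq_comm rfl rfl

lemma inner_star_inl_sum (F : Finset E) (ws : E → ℝ) (d : E → ℂ) :
    (inner ℂ (∑ e ∈ F, ((Real.sqrt (ws e) : ℂ) • ket (E := E) (Sum.inl e)))
        (∑ e : E, d e • ket (Sum.inl e)) : ℂ)
      = ∑ e ∈ F, (Real.sqrt (ws e) : ℂ) * d e := by
  rw [sum_inner]
  refine Finset.sum_congr rfl fun e _ => ?_
  rw [inner_smul_left, inner_sum]
  simp only [inner_smul_right, inner_ket_ket, Sum.inl.injEq, Complex.conj_ofReal]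
  rw [Finset.sum_congr rfl (fun f _ => by rw [mul_ite, mul_one, mul_zero])]
  rw [Finset.sum_ite_eq' Finset.univ e d]
  simp

lemma inner_star_inl_ket (F : Finset E) (ws : E → ℝ) (y : Bool) :
    (inner ℂ (∑ e ∈ F, ((Real.sqrt (ws e) : ℂ) • ket (E := E) (Sum.inl e)))
        (ket (Sum.inr y)) : ℂ) = 0 := by
  rw [sum_inner]
  simp only [inner_smul_left, inner_ket_ket]
  simp

lemma inner_ket_inl_sum (q : Bool) (d : E → ℂ) :
    (inner ℂ (ket (E := E) (Sum.inr q)) (∑ e : E, d e • ket (Sum.inl e)) : ℂ) = 0 := by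
  rw [inner_sum]
  simp only [inner_smul_right, inner_ket_ket]
  simp

lemma inner_psiA_inl_sum (endA : E → V) (ws : E → ℝ) (s u : V) (d : E → ℂ) :
    (inner ℂ (psiA endA ws s u) (∑ e : E, d e • ket (Sum.inl e)) : ℂ)
      = ∑ e ∈ Finset.univ.filter (fun e => endA e = u), (Real.sqrt (ws e) : ℂ) * d e := by
  rw [psiA, inner_add_left, inner_star_inl_sum]
  split_ifs with h
  · rw [inner_ket_inl_sum]; ring
  · rw [inner_zero_left]; ring

lemma inner_psiA_inr (endA : E → V) (ws : E → ℝ) (s u : V) (y : Bool) :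
    (inner ℂ (psiA endA ws s u) (ket (Sum.inr y)) : ℂ)
      = if u = s ∧ y = false then 1 else 0 := by
  rw [psiA, inner_add_left, inner_star_inl_ket, zero_add]
  by_cases h1 : u = s
  · simp only [h1, if_true, inner_ket_ket]
    cases y <;> simp
  · simp only [h1, if_false, inner_zero_left]
    simp [h1]

lemma inner_psiB_inl_sum (endB : E → V) (ws : E → ℝ) (t u : V) (d : E → ℂ) :
    (inner ℂ (psiB endB ws t u) (∑ e : E, d e • ket (Sum.inl e)) : ℂ)
      = ∑ e ∈ Finset.univ.filter (fun e => endB e = u), (Real.sqrt (ws e) : ℂ) * d e := by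
  rw [psiB, inner_add_left, inner_star_inl_sum]
  split_ifs with h
  · rw [inner_ket_inl_sum]; ring
  · rw [inner_zero_left]; ring

lemma inner_psiB_inr (endB : E → V) (ws : E → ℝ) (t u : V) (y : Bool) :
    (inner ℂ (psiB endB ws t u) (ket (Sum.inr y)) : ℂ)
      = if u = t ∧ y = true then 1 else 0 := by
  rw [psiB, inner_add_left, inner_star_inl_ket, zero_add]
  by_cases h1 : u = t
  · simp only [h1, if_true, inner_ket_ket]
    cases y <;> simp
  · simp only [h1, if_false, inner_zero_left]
    simp [h1]

lemma sum_psiA (A : Finset V) (endA : E → V) (hA : ∀ e, endA e ∈ A) (ws : E → ℝ)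
    (s : V) (hs : s ∈ A) :
    ∑ u ∈ A, psiA endA ws s u
      = (∑ e : E, ((Real.sqrt (ws e) : ℂ) • ket (Sum.inl e))) + ket (Sum.inr false) := by
  simp only [psiA]
  rw [Finset.sum_add_distrib]
  congr 1
  · exact Finset.sum_fiberwise_of_maps_to (fun e _ => hA e) _
  · rw [Finset.sum_ite_eq' A s (fun _ => ket (Sum.inr false))]
    simp [hs]

lemma sum_psiB (B : Finset V) (endB : E → V) (hB : ∀ e, endB e ∈ B) (ws : E → ℝ)
    (t : V) (ht : t ∈ B) :
    ∑ u ∈ B, psiB endB ws t u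
      = (∑ e : E, ((Real.sqrt (ws e) : ℂ) • ket (Sum.inl e))) + ket (Sum.inr true) := by
  simp only [psiB]
  rw [Finset.sum_add_distrib]
  congr 1
  · exact Finset.sum_fiberwise_of_maps_to (fun e _ => hB e) _
  · rw [Finset.sum_ite_eq' B t (fun _ => ket (Sum.inr true))]
    simp [ht]



theorem electric_walk_transduction_reweighted
    (A B : Finset V) (hAB : Disjoint A B)
    (endA endB : E → V) (hA : ∀ e, endA e ∈ A) (hB : ∀ e, endB e ∈ B)
    (w : E → ℝ) (hw : ∀ e, 0 < w e)
    (s t : V) (hs : s ∈ A) (ht : t ∈ B)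
    (p : E → ℝ)
    (hpA : ∀ u ∈ A, ∑ e ∈ Finset.univ.filter (fun e => endA e = u), p e
        = if u = s then 1 else 0)
    (hpB : ∀ u ∈ B, ∑ e ∈ Finset.univ.filter (fun e => endB e = u), p e
        = if u = t then 1 else 0)
    (W R : ℝ) (hW : W = ∑ e : E, w e) (hR : R = ∑ e : E, (p e) ^ 2 / w e)
    (hWpos : 0 < W) (hRpos : 0 < R)
    (α : ℝ) (hα : α = Real.sqrt (R / W))
    (RA RB : EuclideanSpace ℂ (E ⊕ Bool) →ₗ[ℂ] EuclideanSpace ℂ (E ⊕ Bool))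
    (hRAneg : ∀ u ∈ A, RA (psiA endA (fun e => α * w e) s u) = -psiA endA (fun e => α * w e) s u)
    (hRAid : ∀ x, (∀ u ∈ A, (inner ℂ (psiA endA (fun e => α * w e) s u) x : ℂ) = 0) → RA x = x)
    (hRBneg : ∀ u ∈ B, RB (psiB endB (fun e => α * w e) t u) = -psiB endB (fun e => α * w e) t u)
    (hRBid : ∀ x, (∀ u ∈ B, (inner ℂ (psiB endB (fun e => α * w e) t u) x : ℂ) = 0) → RB x = x) :
    ∃ v ∈ Submodule.span ℂ
        (Set.range (fun e : E => ket (Sum.inl e) : E → EuclideanSpace ℂ (E ⊕ Bool))),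
      RB (RA (ket (Sum.inr false) + v)) = ket (Sum.inr true) + v ∧
      ‖v‖ ^ 2 ≤ Real.sqrt (W * R) := by
  classical
  have hαpos : 0 < α := by
    rw [hα]; exact Real.sqrt_pos.2 (div_pos hRpos hWpos)
  set w' : E → ℝ := fun e => α * w e with hw'def
  have hw'pos : ∀ e, 0 < w' e := fun e => mul_pos hαpos (hw e)
  have hsqpos : ∀ e, 0 < Real.sqrt (w' e) := fun e => Real.sqrt_pos.2 (hw'pos e)
  set c : E → ℝ := fun e => (w' e - p e) / (2 * Real.sqrt (w' e)) with hcdef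
  have hsc : ∀ e, Real.sqrt (w' e) * c e = (w' e - p e) / 2 := by
    intro e
    have h := (hsqpos e).ne'
    simp only [hcdef]
    field_simp
  set v : EuclideanSpace ℂ (E ⊕ Bool) := ∑ e : E, ((c e : ℝ) : ℂ) • ket (Sum.inl e) with hvdef
  set ΨA : EuclideanSpace ℂ (E ⊕ Bool) := ∑ u ∈ A, psiA endA w' s u with hΨAdef
  set ΨB : EuclideanSpace ℂ (E ⊕ Bool) := ∑ u ∈ B, psiB endB w' t u with hΨBdef
  have hΨA : ΨA = (∑ e : E, ((Real.sqrt (w' e) : ℂ)) • ket (Sum.inl e)) + ket (Sum.inr false) :=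
    sum_psiA A endA hA w' s hs
  have hΨB : ΨB = (∑ e : E, ((Real.sqrt (w' e) : ℂ)) • ket (Sum.inl e)) + ket (Sum.inr true) :=
    sum_psiB B endB hB w' t ht
  have hcs : ∀ e : E, (Real.sqrt (w' e) : ℂ) * ((c e : ℝ) : ℂ)
      = (((w' e - p e) / 2 : ℝ) : ℂ) := by
    intro e; rw [← Complex.ofReal_mul, hsc e]
  have hss : ∀ e : E, (Real.sqrt (w' e) : ℂ) * ((Real.sqrt (w' e) : ℝ) : ℂ)
      = ((w' e : ℝ) : ℂ) := by
    intro e; rw [← Complex.ofReal_mul, Real.mul_self_sqrt (hw'pos e).le]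
  -- orthogonality for the A side
  have orthA : ∀ u ∈ A, (inner ℂ (psiA endA w' s u)
      ((ket (E := E) (Sum.inr false) + v) - (2⁻¹ : ℂ) • ΨA) : ℂ) = 0 := by
    intro u hu
    have hflow := hpA u hu
    rw [inner_sub_right, inner_add_right, inner_smul_right, hΨA, inner_add_right,
        hvdef]
    simp only [inner_psiA_inl_sum, inner_psiA_inr]
    rw [Finset.sum_congr rfl fun e _ => hcs e, Finset.sum_congr rfl fun e _ => hss e,
        ← Complex.ofReal_sum, ← Complex.ofReal_sum]
    have h3 : ∑ e ∈ Finset.univ.filter (fun e => endA e = u), (w' e - p e) / 2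
        = ((∑ e ∈ Finset.univ.filter (fun e => endA e = u), w' e)
            - (if u = s then (1:ℝ) else 0)) / 2 := by
      rw [← Finset.sum_div, Finset.sum_sub_distrib, hflow]
    rw [h3]
    by_cases hus : u = s <;> simp [hus] <;> push_cast <;> ring
  -- orthogonality for the B side
  have orthB : ∀ u ∈ B, (inner ℂ (psiB endB w' t u)
      (((ket (E := E) (Sum.inr false) + v) - ΨA) + (2⁻¹ : ℂ) • ΨB) : ℂ) = 0 := by
    intro u hu
    have hflow := hpB u hu
    rw [inner_add_right, inner_sub_right, inner_add_right, inner_smul_right, hΨA, hΨB,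
        inner_add_right, inner_add_right,
        hvdef]
    simp only [inner_psiB_inl_sum, inner_psiB_inr]
    rw [Finset.sum_congr rfl fun e _ => hcs e, Finset.sum_congr rfl fun e _ => hss e,
        ← Complex.ofReal_sum, ← Complex.ofReal_sum]
    have h3 : ∑ e ∈ Finset.univ.filter (fun e => endB e = u), (w' e - p e) / 2
        = ((∑ e ∈ Finset.univ.filter (fun e => endB e = u), w' e)
            - (if u = t then (1:ℝ) else 0)) / 2 := by
      rw [← Finset.sum_div, Finset.sum_sub_distrib, hflow]
    rw [h3]
    by_cases hut : u = t <;> simp [hut] <;> push_cast <;> ring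
  -- reflections on the star sums
  have hRAΨ : RA ΨA = -ΨA := by
    rw [hΨAdef, map_sum, Finset.sum_congr rfl (fun u hu => hRAneg u hu)]
    exact Finset.sum_neg_distrib _
  have hRBΨ : RB ΨB = -ΨB := by
    rw [hΨBdef, map_sum, Finset.sum_congr rfl (fun u hu => hRBneg u hu)]
    exact Finset.sum_neg_distrib _
  have step1 : RA (ket (E := E) (Sum.inr false) + v)
      = (ket (E := E) (Sum.inr false) + v) - ΨA := by
    have hfix := hRAid _ orthA
    have hsplit : ket (E := E) (Sum.inr false) + v
        = ((ket (E := E) (Sum.inr false) + v) - (2⁻¹ : ℂ) • ΨA) + (2⁻¹ : ℂ) • ΨA := by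
      abel
    rw [hsplit, map_add, hfix, map_smul, hRAΨ]
    module
  have step2 : RB ((ket (E := E) (Sum.inr false) + v) - ΨA)
      = ((ket (E := E) (Sum.inr false) + v) - ΨA) + ΨB := by
    have hfix := hRBid _ orthB
    have hsplit : (ket (E := E) (Sum.inr false) + v) - ΨA
        = (((ket (E := E) (Sum.inr false) + v) - ΨA) + (2⁻¹ : ℂ) • ΨB)
            - (2⁻¹ : ℂ) • ΨB := by
      abel
    rw [hsplit, map_sub, hfix, map_smul, hRBΨ]
    module
  refine ⟨v, ?_, ?_, ?_⟩
  · exact Submodule.sum_mem _ fun e _ =>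
      Submodule.smul_mem _ _ (Submodule.subset_span ⟨e, rfl⟩)
  · rw [step1, step2, hΨA, hΨB]
    abel
  · -- the norm bound
    have hvv : (inner ℂ v v : ℂ) = ((∑ e : E, (c e) ^ 2 : ℝ) : ℂ) := by
      have hterm : ∀ e : E, (inner ℂ (((c e : ℝ) : ℂ) • ket (E := E) (Sum.inl e))
          (∑ f : E, ((c f : ℝ) : ℂ) • ket (Sum.inl f)) : ℂ) = (((c e) ^ 2 : ℝ) : ℂ) := by
        intro e
        rw [inner_smul_left, inner_sum]
        simp only [inner_smul_right, inner_ket_ket, Sum.inl.injEq, Complex.conj_ofReal]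
        rw [Finset.sum_congr rfl (fun f _ => by rw [mul_ite, mul_one, mul_zero]),
          Finset.sum_ite_eq' Finset.univ e]
        simp only [Finset.mem_univ, if_true]
        push_cast
        ring
      rw [hvdef, sum_inner, Finset.sum_congr rfl fun e _ => hterm e, ← Complex.ofReal_sum]
    have hnorm : ‖v‖ ^ 2 = ∑ e : E, (c e) ^ 2 := by
      have h := InnerProductSpace.norm_sq_eq_re_inner (𝕜 := ℂ) v
      rw [hvv] at h
      simpa only [RCLike.ofReal_re, RCLike.re_to_complex, Complex.ofReal_re] using h
    have hα2 : α ^ 2 = R / W := by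
      rw [hα]; exact Real.sq_sqrt (div_pos hRpos hWpos).le
    have hRα : R / α = Real.sqrt (W * R) := by
      have h1 : (R / α) ^ 2 = W * R := by
        rw [div_pow, hα2]
        field_simp
      rw [← h1, Real.sqrt_sq (by positivity)]
    have hαW : α * W = Real.sqrt (W * R) := by
      have h2 : α * W = R / α := by
        rw [eq_div_iff hαpos.ne']
        have : α * W * α = α ^ 2 * W := by ring
        rw [this, hα2]
        field_simp
      rw [h2, hRα]
    have hterm2 : ∀ e : E, (c e) ^ 2 ≤ w' e / 2 + (p e) ^ 2 / (2 * w' e) := by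
      intro e
      have hp := hw'pos e
      have hc2 : (c e) ^ 2 = (w' e - p e) ^ 2 / (4 * w' e) := by
        simp only [hcdef]
        rw [div_pow, mul_pow, Real.sq_sqrt hp.le]
        norm_num
      have h1 : (w' e - p e) ^ 2 ≤ 2 * (w' e) ^ 2 + 2 * (p e) ^ 2 := by
        nlinarith [sq_nonneg (w' e + p e)]
      have h2 : (2 * (w' e) ^ 2 + 2 * (p e) ^ 2) / (4 * w' e)
          = w' e / 2 + (p e) ^ 2 / (2 * w' e) := by
        field_simp
        ring
      rw [hc2, ← h2]
      gcongr
    rw [hnorm]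
    calc ∑ e : E, (c e) ^ 2 ≤ ∑ e : E, (w' e / 2 + (p e) ^ 2 / (2 * w' e)) :=
        Finset.sum_le_sum fun e _ => hterm2 e
      _ = (α * W) / 2 + (R / α) / 2 := by
          rw [Finset.sum_add_distrib]
          congr 1
          · rw [← Finset.sum_div]
            congr 1
            rw [hW, Finset.mul_sum]
          · have h4 : ∀ e : E, (p e) ^ 2 / (2 * w' e) = ((p e) ^ 2 / w e) / α / 2 := by
              intro e
              simp only [hw'def]
              rw [div_div, div_div]
              congr 1
              ring
            rw [Finset.sum_congr rfl fun e _ => h4 e, ← Finset.sum_div, ← Finset.sum_div, ← hR]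
      _ = Real.sqrt (W * R) := by rw [hαW, hRα]; ring

end Stmt7
end
end

section
/- Let G_n' be the extended welded tree graph of odd depth n, and define v₂ ∈ ℂ^E by: (v₂)_e = (−1/2)^⌊j/2⌋ if e belongs to layer j of the left tree, and (v₂)_e = (−1/2)^⌈j/2⌉ if e belongs to layer j of the right tree (the middle layer being layer n+1 of both trees, on which the two formulas agree since n is odd). Then |ss'⟩ + v₂ lies in the span of {ψ_u : u ∈ A}, and v₂ + |t't⟩ is orthogonal to ψ_u for every u ∈ B. Consequently R_A(|ss'⟩ + v₂ − |t't⟩) = −|ss'⟩ − v₂ − |t't⟩ and R_B fixes −|ss'⟩ − v₂ − |t't⟩. -/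
/-!
**Statement 8.**
Let `G_n'` be the extended welded tree graph of odd depth `n`, and define `v₂ ∈ ℂ^E` by
`(v₂)_e = (−1/2)^⌊j/2⌋` on layer `j` of the left tree and `(v₂)_e = (−1/2)^⌈j/2⌉` on layer `j`
of the right tree (the middle layer being layer `n+1` of both trees, on which the two
formulas agree as `n` is odd).  Then `|ss'⟩ + v₂` lies in the span of `{ψ_u : u ∈ A}`, and
`v₂ + |t't⟩` is orthogonal to `ψ_u` for every `u ∈ B`.  Consequently
`R_A (|ss'⟩ + v₂ − |t't⟩) = −|ss'⟩ − v₂ − |t't⟩` and `R_B` fixes `−|ss'⟩ − v₂ − |t't⟩`.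

The welded tree graph is modelled abstractly: vertices `V` carry a side (`false` = left tree,
`true` = right tree) and a depth `≤ n`; edges `E` carry a layer `lay e ∈ {1, …, n+1}`
(`lay e = n+1` meaning a middle edge) and a side (meaningful for tree edges), with endpoint
maps `ep0` (shallower / left endpoint) and `ep1` (deeper / right endpoint).  A tree edge of
layer `j` joins a vertex of depth `j−1` to one of depth `j` on its own side; a middle edge
joins a left leaf to a right leaf.  Every vertex of depth `< n` has exactly two child edges,
every vertex of depth `≥ 1` has exactly one parent tree edge, and every leaf is incident to
exactly two middle edges; `s` and `t` are the unique roots of the two trees.  All edges have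
weight 1.  The walk space is `EuclideanSpace ℂ (E ⊕ Bool)` (`Sum.inr false = ss'`,
`Sum.inr true = t't`); part `A` consists of left vertices of even depth and right vertices of
odd depth, part `B` of the remaining vertices.  `R_A` is the unitary acting as `−1` on
`span{ψ_u : u ∈ A}` and as the identity on its orthogonal complement, specified here by these
defining properties (similarly `R_B`).
-/

noncomputable section

namespace Stmt8

variable {V E : Type*} [Fintype V] [Fintype E] [DecidableEq V] [DecidableEq E]

def ket (x : E ⊕ Bool) : EuclideanSpace ℂ (E ⊕ Bool) := EuclideanSpace.single x 1

/-- Vertices of part `A`: left vertices of even depth, right vertices of odd depth. -/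
def inA (sideV : V → Bool) (depth : V → ℕ) (u : V) : Prop :=
  (sideV u = false ∧ Even (depth u)) ∨ (sideV u = true ∧ Odd (depth u))

/-- Vertices of part `B`: left vertices of odd depth, right vertices of even depth. -/
def inB (sideV : V → Bool) (depth : V → ℕ) (u : V) : Prop :=
  (sideV u = false ∧ Odd (depth u)) ∨ (sideV u = true ∧ Even (depth u))

/-- The star state of a vertex `u`: the sum of the basis states of all edges of the extended
graph incident to `u` (all weights being 1). -/
def psi (ep0 ep1 : E → V) (s t : V) (u : V) : EuclideanSpace ℂ (E ⊕ Bool) :=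
  (∑ e ∈ Finset.univ.filter (fun e => ep0 e = u), ket (Sum.inl e)) +
  (∑ e ∈ Finset.univ.filter (fun e => ep1 e = u), ket (Sum.inl e)) +
  (if u = s then ket (Sum.inr false) else 0) +
  (if u = t then ket (Sum.inr true) else 0)

/-- The vector `v₂`: amplitude `(−1/2)^⌊j/2⌋` on layer `j` of the left tree and
`(−1/2)^⌈j/2⌉` on layer `j` of the right tree (`⌊j/2⌋ = j/2` and `⌈j/2⌉ = (j+1)/2` in
natural-number division). -/
def v₂ (lay : E → ℕ) (sideE : E → Bool) : EuclideanSpace ℂ (E ⊕ Bool) :=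
  ∑ e : E, ((if sideE e = false then (-(1/2) : ℂ) ^ (lay e / 2)
      else (-(1/2) : ℂ) ^ ((lay e + 1) / 2)) • ket (Sum.inl e))

lemma ket_apply (x y : E ⊕ Bool) : (ket x : EuclideanSpace ℂ (E ⊕ Bool)) y = if y = x then 1 else 0 :=
  EuclideanSpace.single_apply x 1 y

lemma v₂_apply_inl (lay : E → ℕ) (sideE : E → Bool) (f : E) :
    v₂ lay sideE (Sum.inl f) = if sideE f = false then (-(1/2) : ℂ) ^ (lay f / 2)
      else (-(1/2) : ℂ) ^ ((lay f + 1) / 2) := by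
  unfold v₂
  rw [WithLp.ofLp_sum, Finset.sum_apply]
  simp only [PiLp.smul_apply, ket_apply, smul_eq_mul, mul_ite, mul_one, mul_zero,
    Sum.inl.injEq]
  rw [Finset.sum_ite_eq]
  simp

lemma v₂_apply_inr (lay : E → ℕ) (sideE : E → Bool) (b : Bool) :
    v₂ lay sideE (Sum.inr b) = 0 := by
  unfold v₂
  rw [WithLp.ofLp_sum, Finset.sum_apply]
  simp only [PiLp.smul_apply, ket_apply]
  simp

lemma psi_apply_inl (ep0 ep1 : E → V) (s t u : V) (f : E) :
    psi ep0 ep1 s t u (Sum.inl f)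
      = (if ep0 f = u then (1:ℂ) else 0) + (if ep1 f = u then 1 else 0) := by
  unfold psi
  simp only [PiLp.add_apply]
  rw [WithLp.ofLp_sum, WithLp.ofLp_sum, Finset.sum_apply, Finset.sum_apply]
  simp only [ket_apply, Sum.inl.injEq,
    apply_ite (fun g : EuclideanSpace ℂ (E ⊕ Bool) => g (Sum.inl f))]
  rw [Finset.sum_ite_eq, Finset.sum_ite_eq]
  simp

lemma psi_apply_inr_false (ep0 ep1 : E → V) (s t u : V) :
    psi ep0 ep1 s t u (Sum.inr false) = if u = s then 1 else 0 := by
  unfold psi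
  simp only [PiLp.add_apply]
  rw [WithLp.ofLp_sum, WithLp.ofLp_sum, Finset.sum_apply, Finset.sum_apply]
  simp [ket_apply, apply_ite (fun g : EuclideanSpace ℂ (E ⊕ Bool) => g (Sum.inr false))]

lemma psi_apply_inr_true (ep0 ep1 : E → V) (s t u : V) :
    psi ep0 ep1 s t u (Sum.inr true) = if u = t then 1 else 0 := by
  unfold psi
  simp only [PiLp.add_apply]
  rw [WithLp.ofLp_sum, WithLp.ofLp_sum, Finset.sum_apply, Finset.sum_apply]
  simp [ket_apply, apply_ite (fun g : EuclideanSpace ℂ (E ⊕ Bool) => g (Sum.inr true))]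

lemma inner_psi (ep0 ep1 : E → V) (s t u : V) (y : EuclideanSpace ℂ (E ⊕ Bool)) :
    (inner ℂ (psi ep0 ep1 s t u) y : ℂ)
      = (∑ e ∈ Finset.univ.filter (fun e => ep0 e = u), y (Sum.inl e))
      + (∑ e ∈ Finset.univ.filter (fun e => ep1 e = u), y (Sum.inl e))
      + (if u = s then y (Sum.inr false) else 0)
      + (if u = t then y (Sum.inr true) else 0) := by
  unfold psi ket
  rw [inner_add_left, inner_add_left, inner_add_left, sum_inner, sum_inner]
  simp [EuclideanSpace.inner_single_left,
    apply_ite (fun v : EuclideanSpace ℂ (E ⊕ Bool) => (inner ℂ v y : ℂ))]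

theorem welded_v2_reflections
    (n : ℕ) (hn : Odd n)
    (sideV : V → Bool) (depth : V → ℕ) (hdepth : ∀ u, depth u ≤ n)
    (lay : E → ℕ) (sideE : E → Bool) (ep0 ep1 : E → V)
    (hlay : ∀ e, 1 ≤ lay e ∧ lay e ≤ n + 1)
    (htree : ∀ e, lay e ≤ n → sideV (ep0 e) = sideE e ∧ depth (ep0 e) = lay e - 1 ∧
        sideV (ep1 e) = sideE e ∧ depth (ep1 e) = lay e)
    (hmid : ∀ e, lay e = n + 1 → sideV (ep0 e) = false ∧ depth (ep0 e) = n ∧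
        sideV (ep1 e) = true ∧ depth (ep1 e) = n)
    (s t : V) (hs : sideV s = false ∧ depth s = 0) (ht : sideV t = true ∧ depth t = 0)
    (hroot : ∀ u, depth u = 0 → (sideV u = false → u = s) ∧ (sideV u = true → u = t))
    (hchild : ∀ u, depth u < n → (Finset.univ.filter fun e => ep0 e = u).card = 2)
    (hparent : ∀ u, 1 ≤ depth u →
        (Finset.univ.filter fun e => lay e ≤ n ∧ ep1 e = u).card = 1)
    (hmidL : ∀ u, sideV u = false → depth u = n →
        (Finset.univ.filter fun e => lay e = n + 1 ∧ ep0 e = u).card = 2)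
    (hmidR : ∀ u, sideV u = true → depth u = n →
        (Finset.univ.filter fun e => lay e = n + 1 ∧ ep1 e = u).card = 2)
    (RA RB : EuclideanSpace ℂ (E ⊕ Bool) →ₗ[ℂ] EuclideanSpace ℂ (E ⊕ Bool))
    (hRAneg : ∀ u, inA sideV depth u → RA (psi ep0 ep1 s t u) = -psi ep0 ep1 s t u)
    (hRAid : ∀ x, (∀ u, inA sideV depth u → (inner ℂ (psi ep0 ep1 s t u) x : ℂ) = 0) → RA x = x)
    (hRBneg : ∀ u, inB sideV depth u → RB (psi ep0 ep1 s t u) = -psi ep0 ep1 s t u)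
    (hRBid : ∀ x, (∀ u, inB sideV depth u → (inner ℂ (psi ep0 ep1 s t u) x : ℂ) = 0) → RB x = x) :
    (ket (Sum.inr false) + v₂ lay sideE) ∈
        Submodule.span ℂ (psi ep0 ep1 s t '' {u | inA sideV depth u}) ∧
    (∀ u, inB sideV depth u →
        (inner ℂ (psi ep0 ep1 s t u) (v₂ lay sideE + ket (Sum.inr true)) : ℂ) = 0) ∧
    RA (ket (Sum.inr false) + v₂ lay sideE - ket (Sum.inr true))
        = -ket (Sum.inr false) - v₂ lay sideE - ket (Sum.inr true) ∧
    RB (-ket (Sum.inr false) - v₂ lay sideE - ket (Sum.inr true))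
        = -ket (Sum.inr false) - v₂ lay sideE - ket (Sum.inr true) := by
  classical
  obtain ⟨hsS, hsD⟩ := hs
  obtain ⟨htS, htD⟩ := ht
  have hn1 : 1 ≤ n := hn.pos
  obtain ⟨m, hm⟩ := hn
  set c : E → ℂ := fun e => if sideE e = false then (-(1/2) : ℂ) ^ (lay e / 2)
      else (-(1/2) : ℂ) ^ ((lay e + 1) / 2) with hc
  set α : V → ℂ := fun u => if sideV u = false then (-(1/2):ℂ) ^ (depth u / 2)
      else (-(1/2):ℂ) ^ ((depth u + 1) / 2) with hα
  have hlayE : ∀ e, lay e ≤ n ∨ lay e = n + 1 := fun e => by have := hlay e; omega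
  -- incidence structure facts
  have hep0_lt : ∀ u, depth u < n → ∀ e, ep0 e = u → sideE e = sideV u ∧ lay e = depth u + 1 := by
    intro u hu e he
    rcases hlayE e with h | h
    · obtain ⟨h1, h2, _, _⟩ := htree e h
      have := (hlay e).1
      rw [he] at h1 h2
      exact ⟨h1.symm, by omega⟩
    · obtain ⟨_, h2, _, _⟩ := hmid e h
      rw [he] at h2; omega
  have hep0_leaf : ∀ u, sideV u = false → depth u = n → ∀ e, ep0 e = u →
      lay e = n + 1 ∧ c e = (-(1/2):ℂ) ^ ((n+1)/2) := by
    intro u hside hdep e he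
    rcases hlayE e with h | h
    · obtain ⟨_, h2, _, _⟩ := htree e h
      rw [he, hdep] at h2
      have := (hlay e).1
      omega
    · refine ⟨h, ?_⟩
      simp only [hc, h]
      split <;> first | rfl | (congr 1; omega)
  have hep1_fact : ∀ u, (sideV u = false ∨ depth u ≠ n) → ∀ e, ep1 e = u →
      sideE e = sideV u ∧ lay e = depth u ∧ lay e ≤ n := by
    intro u hu e he
    rcases hlayE e with h | h
    · obtain ⟨_, _, h3, h4⟩ := htree e h
      rw [he] at h3 h4
      exact ⟨h3.symm, h4.symm, h⟩
    · obtain ⟨_, _, h3, h4⟩ := hmid e h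
      rw [he] at h3 h4
      rcases hu with hu | hu
      · rw [h3] at hu; cases hu
      · omega
  have hfilter1 : ∀ u, (sideV u = false ∨ depth u ≠ n) →
      (Finset.univ.filter fun e => ep1 e = u) =
      (Finset.univ.filter fun e => lay e ≤ n ∧ ep1 e = u) := by
    intro u hu
    ext e
    simp only [Finset.mem_filter, Finset.mem_univ, true_and]
    exact ⟨fun he => ⟨(hep1_fact u hu e he).2.2, he⟩, fun h => h.2⟩
  have hep1_t : ∀ e, ep1 e ≠ t := by
    intro e he
    rcases hlayE e with h | h
    · have h4 := (htree e h).2.2.2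
      rw [he, htD] at h4
      have := (hlay e).1
      omega
    · have h4 := (hmid e h).2.2.2
      rw [he, htD] at h4
      omega
  -- constant-sum helper
  have sum_const_of : ∀ (F : Finset E) (v : ℂ) (k : ℕ), F.card = k → (∀ e ∈ F, c e = v) →
      ∑ e ∈ F, c e = (k : ℂ) * v := by
    intro F v k hk hv
    rw [Finset.sum_congr rfl hv, Finset.sum_const, hk, nsmul_eq_mul]
  -- Claim 2 core: incidence sums at B vertices
  have hBsum : ∀ u, inB sideV depth u →
      (∑ e ∈ Finset.univ.filter (fun e => ep0 e = u), c e)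
      + (∑ e ∈ Finset.univ.filter (fun e => ep1 e = u), c e)
      + (if u = t then (1:ℂ) else 0) = 0 := by
    intro u hu
    rcases hu with ⟨hside, hodd⟩ | ⟨hside, heven⟩
    · -- left tree, odd depth
      obtain ⟨k, hk⟩ := hodd
      have hut : u ≠ t := by rintro rfl; rw [htS] at hside; cases hside
      have hd1 : 1 ≤ depth u := by omega
      have hS1 : ∑ e ∈ Finset.univ.filter (fun e => ep1 e = u), c e
          = (-(1/2):ℂ) ^ (depth u / 2) := by
        rw [hfilter1 u (Or.inl hside)]
        rw [sum_const_of _ ((-(1/2):ℂ) ^ (depth u / 2)) 1 (hparent u hd1) ?_]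
        · ring
        · intro e he
          simp only [Finset.mem_filter, Finset.mem_univ, true_and] at he
          obtain ⟨hE, hL, _⟩ := hep1_fact u (Or.inl hside) e he.2
          simp [hc, hE, hside, hL]
      rcases lt_or_eq_of_le (hdepth u) with hdn | hdn
      · have hS0 : ∑ e ∈ Finset.univ.filter (fun e => ep0 e = u), c e
            = 2 * (-(1/2):ℂ) ^ ((depth u + 1) / 2) := by
          rw [sum_const_of _ ((-(1/2):ℂ) ^ ((depth u + 1)/2)) 2 (hchild u hdn) ?_]
          · norm_num
          · intro e he
            simp only [Finset.mem_filter, Finset.mem_univ, true_and] at he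
            obtain ⟨hE, hL⟩ := hep0_lt u hdn e he
            simp [hc, hE, hside, hL]
        rw [hS0, hS1, if_neg hut]
        have hx : (depth u + 1)/2 = depth u / 2 + 1 := by omega
        rw [hx, pow_succ]
        ring
      · have hS0 : ∑ e ∈ Finset.univ.filter (fun e => ep0 e = u), c e
            = 2 * (-(1/2):ℂ) ^ ((n + 1) / 2) := by
          have hcard : (Finset.univ.filter fun e => ep0 e = u).card = 2 := by
            rw [show (Finset.univ.filter fun e => ep0 e = u)
                = (Finset.univ.filter fun e => lay e = n+1 ∧ ep0 e = u) from ?_,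
              hmidL u hside hdn]
            ext e
            simp only [Finset.mem_filter, Finset.mem_univ, true_and]
            exact ⟨fun he => ⟨(hep0_leaf u hside hdn e he).1, he⟩, fun h => h.2⟩
          rw [sum_const_of _ ((-(1/2):ℂ) ^ ((n+1)/2)) 2 hcard (fun e he => by
            simp only [Finset.mem_filter, Finset.mem_univ, true_and] at he
            exact (hep0_leaf u hside hdn e he).2)]
          norm_num
        rw [hS0, hS1, if_neg hut, hdn]
        have hx : (n+1)/2 = n/2 + 1 := by omega
        rw [hx, pow_succ]
        ring
    · -- right tree, even depth
      rcases Nat.eq_zero_or_pos (depth u) with hd0 | hd1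
      · have hutt : u = t := (hroot u hd0).2 hside
        have hS0 : ∑ e ∈ Finset.univ.filter (fun e => ep0 e = u), c e
            = 2 * (-(1/2):ℂ) := by
          rw [sum_const_of _ (-(1/2):ℂ) 2 (hchild u (by omega)) ?_]
          · norm_num
          · intro e he
            simp only [Finset.mem_filter, Finset.mem_univ, true_and] at he
            obtain ⟨hE, hL⟩ := hep0_lt u (by omega) e he
            rw [hd0] at hL
            simp [hc, hE, hside, hL]
        have hS1 : (Finset.univ.filter fun e => ep1 e = u) = ∅ := by
          ext e
          simp [hutt, hep1_t e]
        rw [hS0, hS1, Finset.sum_empty, if_pos hutt]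
        norm_num
      · have hdnn : depth u ≠ n := by obtain ⟨k, hk⟩ := heven; omega
        have hdn : depth u < n := lt_of_le_of_ne (hdepth u) hdnn
        have hut : u ≠ t := by rintro rfl; omega
        obtain ⟨k, hk⟩ := heven
        have hS0 : ∑ e ∈ Finset.univ.filter (fun e => ep0 e = u), c e
            = 2 * (-(1/2):ℂ) ^ ((depth u + 2) / 2) := by
          rw [sum_const_of _ ((-(1/2):ℂ) ^ ((depth u + 2)/2)) 2 (hchild u hdn) ?_]
          · norm_num
          · intro e he
            simp only [Finset.mem_filter, Finset.mem_univ, true_and] at he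
            obtain ⟨hE, hL⟩ := hep0_lt u hdn e he
            simp only [hc, hE, hside, hL]
            norm_num
            congr 1
            omega
        have hS1 : ∑ e ∈ Finset.univ.filter (fun e => ep1 e = u), c e
            = (-(1/2):ℂ) ^ ((depth u + 1) / 2) := by
          rw [hfilter1 u (Or.inr hdnn)]
          rw [sum_const_of _ ((-(1/2):ℂ) ^ ((depth u + 1)/2)) 1 (hparent u hd1) ?_]
          · ring
          · intro e he
            simp only [Finset.mem_filter, Finset.mem_univ, true_and] at he
            obtain ⟨hE, hL, _⟩ := hep1_fact u (Or.inr hdnn) e he.2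
            simp only [hc, hE, hside, hL]
            norm_num
        rw [hS0, hS1, if_neg hut]
        have hx : (depth u + 2)/2 = (depth u + 1)/2 + 1 := by omega
        rw [hx, pow_succ]
        ring
  -- Claim 2
  have claim2 : ∀ u, inB sideV depth u →
      (inner ℂ (psi ep0 ep1 s t u) (v₂ lay sideE + ket (Sum.inr true)) : ℂ) = 0 := by
    intro u hu
    rw [inner_psi]
    have h1 : ∀ e : E, (v₂ lay sideE + ket (Sum.inr true) : EuclideanSpace ℂ (E ⊕ Bool)) (Sum.inl e) = c e := by
      intro e
      rw [PiLp.add_apply, v₂_apply_inl, ket_apply]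
      simp [hc]
    have h2 : (v₂ lay sideE + ket (Sum.inr true) : EuclideanSpace ℂ (E ⊕ Bool)) (Sum.inr false) = 0 := by
      rw [PiLp.add_apply, v₂_apply_inr, ket_apply]; simp
    have h3 : (v₂ lay sideE + ket (Sum.inr true) : EuclideanSpace ℂ (E ⊕ Bool)) (Sum.inr true) = 1 := by
      rw [PiLp.add_apply, v₂_apply_inr, ket_apply]; simp
    rw [Finset.sum_congr rfl (fun e _ => h1 e), Finset.sum_congr rfl (fun e _ => h1 e), h2, h3]
    rw [ite_self, add_zero]
    exact hBsum u hu
  -- Claim 1 : explicit combination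
  have hAs : inA sideV depth s := Or.inl ⟨hsS, by rw [hsD]; exact Even.zero⟩
  have hAt : ¬ inA sideV depth t := by
    rintro (⟨hb, _⟩ | ⟨_, hodd⟩)
    · rw [htS] at hb; cases hb
    · rw [htD] at hodd; simp at hodd
  have claim1eq : ket (Sum.inr false) + v₂ lay sideE
      = ∑ u ∈ Finset.univ.filter (fun u => inA sideV depth u), α u • psi ep0 ep1 s t u := by
    ext x
    rw [PiLp.add_apply, WithLp.ofLp_sum, Finset.sum_apply]
    simp only [PiLp.smul_apply, smul_eq_mul]
    cases x with
    | inr b =>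
      rw [v₂_apply_inr, ket_apply]
      cases b with
      | false =>
        simp only [psi_apply_inr_false, mul_ite, mul_one, mul_zero, Finset.sum_ite_eq']
        simp [hAs, hα, hsS, hsD]
      | true =>
        simp only [psi_apply_inr_true, mul_ite, mul_one, mul_zero, Finset.sum_ite_eq']
        simp [hAt]
    | inl f =>
      rw [v₂_apply_inl, ket_apply]
      simp only [psi_apply_inl, mul_add, mul_ite, mul_one, mul_zero]
      rw [Finset.sum_add_distrib, Finset.sum_ite_eq, Finset.sum_ite_eq]
      simp only [Finset.mem_filter, Finset.mem_univ, true_and]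
      rw [if_neg (by simp), zero_add]
      rcases hlayE f with h | h
      · obtain ⟨e1, e2, e3, e4⟩ := htree f h
        have hl1 := (hlay f).1
        rcases Nat.even_or_odd (lay f) with ⟨p, hp⟩ | ⟨p, hp⟩
        · -- lay f even
          cases hES : sideE f
          · -- left tree : ep1 ∈ A
            have hA1 : inA sideV depth (ep1 f) :=
              Or.inl ⟨by rw [e3, hES], by rw [e4]; exact ⟨p, hp⟩⟩
            have hA0 : ¬ inA sideV depth (ep0 f) := by
              rintro (⟨_, ⟨q, hq⟩⟩ | ⟨hb, _⟩)
              · rw [e2] at hq; omega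
              · rw [e1, hES] at hb; cases hb
            rw [if_neg hA0, if_pos hA1, zero_add]
            simp only [hα, e3, e4, hES]
          · -- right tree, even layer : ep0 ∈ A
            have hA0 : inA sideV depth (ep0 f) :=
              Or.inr ⟨by rw [e1, hES], by rw [e2]; exact ⟨p - 1, by omega⟩⟩
            have hA1 : ¬ inA sideV depth (ep1 f) := by
              rintro (⟨hb, _⟩ | ⟨_, ⟨q, hq⟩⟩)
              · rw [e3, hES] at hb; cases hb
              · rw [e4] at hq; omega
            rw [if_pos hA0, if_neg hA1, add_zero]
            simp only [hα, e1, e2, hES]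
            norm_num
            congr 1
            omega
        · -- lay f odd
          cases hES : sideE f
          · -- left tree, odd layer : ep0 ∈ A
            have hA0 : inA sideV depth (ep0 f) :=
              Or.inl ⟨by rw [e1, hES], by rw [e2]; exact ⟨p, by omega⟩⟩
            have hA1 : ¬ inA sideV depth (ep1 f) := by
              rintro (⟨_, ⟨q, hq⟩⟩ | ⟨hb, _⟩)
              · rw [e4] at hq; omega
              · rw [e3, hES] at hb; cases hb
            rw [if_pos hA0, if_neg hA1, add_zero]
            simp only [hα, e1, e2, hES]
            norm_num
            congr 1
            omega
          · -- right tree, odd layer : ep1 ∈ A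
            have hA1 : inA sideV depth (ep1 f) :=
              Or.inr ⟨by rw [e3, hES], by rw [e4]; exact ⟨p, by omega⟩⟩
            have hA0 : ¬ inA sideV depth (ep0 f) := by
              rintro (⟨hb, _⟩ | ⟨_, ⟨q, hq⟩⟩)
              · rw [e1, hES] at hb; cases hb
              · rw [e2] at hq; omega
            rw [if_neg hA0, if_pos hA1, zero_add]
            simp only [hα, e3, e4, hES]
      · -- middle edge
        obtain ⟨e1, e2, e3, e4⟩ := hmid f h
        have hA0 : ¬ inA sideV depth (ep0 f) := by
          rintro (⟨_, ⟨q, hq⟩⟩ | ⟨hb, _⟩)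
          · rw [e2] at hq; omega
          · rw [e1] at hb; cases hb
        have hA1 : inA sideV depth (ep1 f) :=
          Or.inr ⟨e3, by rw [e4]; exact ⟨m, by omega⟩⟩
        rw [if_neg hA0, if_pos hA1, zero_add]
        simp only [hα, e3, e4, h]
        rw [if_neg (by simp : ¬ (true = false))]
        split <;> first | rfl | (congr 1; omega)
  have hspan : (ket (Sum.inr false) + v₂ lay sideE) ∈
      Submodule.span ℂ (psi ep0 ep1 s t '' {u | inA sideV depth u}) := by
    rw [claim1eq]
    refine Submodule.sum_mem _ fun u hu => Submodule.smul_mem _ _ (Submodule.subset_span ?_)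
    exact ⟨u, by simpa using hu, rfl⟩
  refine ⟨hspan, claim2, ?_, ?_⟩
  · -- RA
    have hRAv : RA (ket (Sum.inr false) + v₂ lay sideE)
        = -(ket (Sum.inr false) + v₂ lay sideE) := by
      have hle : Submodule.span ℂ (psi ep0 ep1 s t '' {u | inA sideV depth u}) ≤
          LinearMap.ker (RA + LinearMap.id) := by
        rw [Submodule.span_le]
        rintro y ⟨u, hu, rfl⟩
        simp only [SetLike.mem_coe, LinearMap.mem_ker, LinearMap.add_apply, LinearMap.id_apply]
        rw [hRAneg u hu]
        simp
      have h0 := hle hspan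
      rw [LinearMap.mem_ker, LinearMap.add_apply, LinearMap.id_apply] at h0
      exact eq_neg_of_add_eq_zero_left h0
    have hRAt : RA (ket (Sum.inr true)) = ket (Sum.inr true) := by
      apply hRAid
      intro u hu
      have hut : u ≠ t := by
        rintro rfl
        rcases hu with ⟨hb, _⟩ | ⟨_, hodd⟩
        · rw [htS] at hb; cases hb
        · rw [htD] at hodd; simp at hodd
      rw [inner_psi]
      simp [ket_apply, hut]
    rw [sub_eq_add_neg, map_add, map_neg, hRAv, hRAt]
    abel
  · -- RB
    apply hRBid
    intro u hu
    have hus : u ≠ s := by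
      rintro rfl
      rcases hu with ⟨_, hodd⟩ | ⟨hb, _⟩
      · rw [hsD] at hodd; simp at hodd
      · rw [hsS] at hb; cases hb
    have hss : (inner ℂ (psi ep0 ep1 s t u)
        (ket (Sum.inr false) : EuclideanSpace ℂ (E ⊕ Bool)) : ℂ) = 0 := by
      rw [inner_psi]
      simp [ket_apply, hus]
    have hrw : -ket (Sum.inr false) - v₂ lay sideE - ket (Sum.inr true)
        = (-1 : ℂ) • (ket (Sum.inr false) : EuclideanSpace ℂ (E ⊕ Bool))
          + (-1 : ℂ) • (v₂ lay sideE + ket (Sum.inr true)) := by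
      module
    rw [hrw, inner_add_right, inner_smul_right, inner_smul_right, hss, claim2 u hu]
    ring

end Stmt8
end
end

section
/- Let U = R_B R_A be one step of the quantum walk on the extended welded tree graph G_n' of odd depth n. Then −U transduces |ss'⟩ into |t't⟩ with transduction complexity at most 3(n+1); that is, there exists a vector v in the span of {|e⟩ : e ∈ E} with ‖v‖² ≤ 3(n+1) such that −U(|ss'⟩ + v) = |t't⟩ + v. -/
/-!
**Statement 11.**
Let `U = R_B R_A` be one step of the quantum walk on the extended welded tree graph `G_n'` of
odd depth `n`.  Then `−U` transduces `|ss'⟩` into `|t't⟩` with transduction complexity at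
most `3(n+1)`: there is a vector `v` in the span of `{|e⟩ : e ∈ E}` with `‖v‖² ≤ 3(n+1)`
such that `−U(|ss'⟩ + v) = |t't⟩ + v`.

The welded tree graph is modelled abstractly: vertices `V` carry a side (`false` = left tree,
`true` = right tree) and a depth `≤ n`; edges `E` carry a layer `lay e ∈ {1, …, n+1}`
(`lay e = n+1` meaning a middle edge) and a side (meaningful for tree edges), with endpoint
maps `ep0` (shallower / left endpoint) and `ep1` (deeper / right endpoint).  A tree edge of
layer `j` joins a vertex of depth `j−1` to one of depth `j` on its own side; a middle edge
joins a left leaf to a right leaf.  Every vertex of depth `< n` has exactly two child edges,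
every vertex of depth `≥ 1` has exactly one parent tree edge, and every leaf is incident to
exactly two middle edges; `s` and `t` are the unique roots of the two trees.  All edges have
weight 1.  The walk space is `EuclideanSpace ℂ (E ⊕ Bool)` (`Sum.inr false = ss'`,
`Sum.inr true = t't`); part `A` consists of left vertices of even depth and right vertices of
odd depth, part `B` of the remaining vertices.  `R_A` is the unitary acting as `−1` on
`span{ψ_u : u ∈ A}` and as the identity on its orthogonal complement, specified here by these
defining properties (similarly `R_B`).
-/

set_option linter.unusedSectionVars false
set_option maxHeartbeats 1000000

noncomputable section

namespace Stmt11

variable {V E : Type*} [Fintype V] [Fintype E] [DecidableEq V] [DecidableEq E]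

def ket (x : E ⊕ Bool) : EuclideanSpace ℂ (E ⊕ Bool) := EuclideanSpace.single x 1

def inA (sideV : V → Bool) (depth : V → ℕ) (u : V) : Prop :=
  (sideV u = false ∧ Even (depth u)) ∨ (sideV u = true ∧ Odd (depth u))

def inB (sideV : V → Bool) (depth : V → ℕ) (u : V) : Prop :=
  (sideV u = false ∧ Odd (depth u)) ∨ (sideV u = true ∧ Even (depth u))

def psi (ep0 ep1 : E → V) (s t : V) (u : V) : EuclideanSpace ℂ (E ⊕ Bool) :=
  (∑ e ∈ Finset.univ.filter (fun e => ep0 e = u), ket (Sum.inl e)) +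
  (∑ e ∈ Finset.univ.filter (fun e => ep1 e = u), ket (Sum.inl e)) +
  (if u = s then ket (Sum.inr false) else 0) +
  (if u = t then ket (Sum.inr true) else 0)

/-! ### Auxiliary coordinate lemmas -/

lemma ket_apply (x y : E ⊕ Bool) : ket x y = if y = x then (1:ℂ) else 0 :=
  EuclideanSpace.single_apply x 1 y

lemma add_apply (x y : EuclideanSpace ℂ (E ⊕ Bool)) (i : E ⊕ Bool) : (x + y) i = x i + y i := rfl
lemma smul_apply (c : ℂ) (x : EuclideanSpace ℂ (E ⊕ Bool)) (i : E ⊕ Bool) :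
    (c • x) i = c * x i := rfl
lemma zero_apply (i : E ⊕ Bool) : (0 : EuclideanSpace ℂ (E ⊕ Bool)) i = 0 := rfl
lemma sub_apply (x y : EuclideanSpace ℂ (E ⊕ Bool)) (i : E ⊕ Bool) : (x - y) i = x i - y i := rfl
lemma neg_apply (x : EuclideanSpace ℂ (E ⊕ Bool)) (i : E ⊕ Bool) : (-x) i = -(x i) := rfl

lemma sum_apply' {α : Type*} (sf : Finset α) (f : α → EuclideanSpace ℂ (E ⊕ Bool)) (i : E ⊕ Bool) :
    (∑ a ∈ sf, f a) i = ∑ a ∈ sf, f a i := by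
  rw [WithLp.ofLp_sum, Finset.sum_apply]

lemma psi_apply_inl (ep0 ep1 : E → V) (s t : V) (u : V) (e : E) :
    psi ep0 ep1 s t u (Sum.inl e) =
      (if ep0 e = u then (1:ℂ) else 0) + (if ep1 e = u then (1:ℂ) else 0) := by
  simp only [psi, add_apply, sum_apply', ket_apply,
    apply_ite (fun f : EuclideanSpace ℂ (E ⊕ Bool) => f (Sum.inl e)), zero_apply,
    Sum.inl.injEq, reduceCtorEq, if_false, Finset.sum_ite_eq, Finset.mem_filter,
    Finset.mem_univ, true_and, ite_self, add_zero]

lemma psi_apply_inrf (ep0 ep1 : E → V) (s t : V) (u : V) :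
    psi ep0 ep1 s t u (Sum.inr false) = (if u = s then (1:ℂ) else 0) := by
  simp only [psi, add_apply, sum_apply', ket_apply,
    apply_ite (fun f : EuclideanSpace ℂ (E ⊕ Bool) => f (Sum.inr false)), zero_apply]
  simp

lemma psi_apply_inrt (ep0 ep1 : E → V) (s t : V) (u : V) :
    psi ep0 ep1 s t u (Sum.inr true) = (if u = t then (1:ℂ) else 0) := by
  simp only [psi, add_apply, sum_apply', ket_apply,
    apply_ite (fun f : EuclideanSpace ℂ (E ⊕ Bool) => f (Sum.inr true)), zero_apply]
  simp

lemma inner_psi (ep0 ep1 : E → V) (s t : V) (u : V) (w : EuclideanSpace ℂ (E ⊕ Bool)) :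
    (inner ℂ (psi ep0 ep1 s t u) w : ℂ) =
      (∑ e ∈ Finset.univ.filter (fun e => ep0 e = u), w (Sum.inl e)) +
      (∑ e ∈ Finset.univ.filter (fun e => ep1 e = u), w (Sum.inl e)) +
      (if u = s then w (Sum.inr false) else 0) +
      (if u = t then w (Sum.inr true) else 0) := by
  simp only [psi, inner_add_left, sum_inner, ket, EuclideanSpace.inner_single_left, map_one,
    one_mul, apply_ite (fun z : EuclideanSpace ℂ (E ⊕ Bool) => (inner ℂ z w : ℂ)), inner_zero_left]

lemma sum_coords (c : E → ℂ) :
    ∀ x, (∑ e : E, c e • ket (Sum.inl e) : EuclideanSpace ℂ (E ⊕ Bool)) x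
      = Sum.elim c (fun _ => (0:ℂ)) x := by
  intro x
  rw [sum_apply']
  cases x with
  | inl e => simp [smul_apply, ket_apply, Sum.inl.injEq]
  | inr b => simp [smul_apply, ket_apply]

lemma normsq (x : EuclideanSpace ℂ (E ⊕ Bool)) : ‖x‖ ^ 2 = ∑ i, ‖x i‖ ^ 2 := by
  rw [EuclideanSpace.norm_eq, Real.sq_sqrt]
  positivity

/-! ### Scalar coefficients -/

def qc : ℂ := -(1/2 : ℂ)
def alc (j : ℕ) : ℂ := if Even j then qc ^ (j/2) else (1/4 : ℂ) * qc ^ (j/2)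
def chc (j : ℕ) (σ : Bool) : ℂ :=
  if Even j then 0 else (if σ then (3/4 : ℂ) else -(3/4 : ℂ)) * qc ^ (j/2)

lemma not_even_odd {k : ℕ} : ¬ Even (2*k+1) := by rw [Nat.even_iff]; omega
lemma even_kk {k : ℕ} : Even (k+k) := ⟨k, rfl⟩

lemma LP (j : ℕ) : alc j + chc j false = qc ^ ((j+1)/2) := by
  rcases Nat.even_or_odd j with ⟨k, rfl⟩ | ⟨k, rfl⟩
  · have h1 : (k+k)/2 = k := by omega
    have h2 : (k+k+1)/2 = k := by omega
    simp [alc, chc, even_kk, h1, h2]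
  · have h1 : (2*k+1)/2 = k := by omega
    have h2 : (2*k+1+1)/2 = k+1 := by omega
    simp only [alc, chc, not_even_odd, if_false, if_neg, Bool.false_eq_true, h1, h2, pow_succ, qc]
    ring

lemma LS (j : ℕ) : alc j + chc j true = qc ^ (j/2) := by
  rcases Nat.even_or_odd j with ⟨k, rfl⟩ | ⟨k, rfl⟩
  · simp [alc, chc, even_kk]
  · simp only [alc, chc, not_even_odd, if_false, if_true, qc]; ring

lemma LQ (j : ℕ) : chc j false - alc j = -qc ^ (j/2) := by
  rcases Nat.even_or_odd j with ⟨k, rfl⟩ | ⟨k, rfl⟩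
  · simp [alc, chc, even_kk]
  · simp only [alc, chc, not_even_odd, if_false, Bool.false_eq_true, qc]; ring

lemma LT (j : ℕ) : chc j true - alc j = -qc ^ ((j+1)/2) := by
  rcases Nat.even_or_odd j with ⟨k, rfl⟩ | ⟨k, rfl⟩
  · have h1 : (k+k)/2 = k := by omega
    have h2 : (k+k+1)/2 = k := by omega
    simp [alc, chc, even_kk, h1, h2]
  · have h1 : (2*k+1)/2 = k := by omega
    have h2 : (2*k+1+1)/2 = k+1 := by omega
    simp only [alc, chc, not_even_odd, if_false, if_true, h1, h2, pow_succ, qc]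
    ring

lemma chc_even {j : ℕ} (h : Even j) (σ : Bool) : chc j σ = 0 := by simp [chc, h]
lemma alc_even {j : ℕ} (h : Even j) : alc j = qc ^ (j/2) := by simp [alc, h]

lemma qc_rec : (1:ℂ) + 2*qc = 0 := by norm_num [qc]

lemma alc_sq (j : ℕ) : ‖alc j‖ ^ 2 ≤ (1/2 : ℝ) ^ j := by
  have hq : ‖qc‖ = 1/2 := by simp [qc]
  rcases Nat.even_or_odd j with ⟨k, rfl⟩ | ⟨k, rfl⟩
  · have h1 : (k+k)/2 = k := by omega
    rw [alc, if_pos even_kk, h1, norm_pow, hq, ← pow_mul]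
    apply le_of_eq; congr 1; omega
  · have h1 : (2*k+1)/2 = k := by omega
    rw [alc, if_neg not_even_odd, h1, norm_mul, norm_pow, hq, mul_pow, ← pow_mul]
    have h4 : ‖(1/4 : ℂ)‖ = 1/4 := by norm_num
    rw [h4]
    have h5 : (1/2:ℝ)^(2*k+1) = (1/2) * (1/2)^(k*2) := by
      rw [mul_comm k 2, pow_succ']
    rw [h5]
    have hp : (0:ℝ) < (1/2)^(k*2) := by positivity
    nlinarith

lemma sum_const_val {α β : Type*} [NonAssocSemiring β] (sf : Finset α) (g : α → β) (c : β)
    (h : ∀ e ∈ sf, g e = c) : ∑ e ∈ sf, g e = sf.card * c := by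
  rw [Finset.sum_congr rfl h, Finset.sum_const, nsmul_eq_mul]

lemma inA_iff (sideV : V → Bool) (depth : V → ℕ) (u : V) :
    inA sideV depth u ↔ (if sideV u = true then Odd (depth u) else Even (depth u)) := by
  cases h : sideV u <;> simp [inA, h]

lemma inB_iff (sideV : V → Bool) (depth : V → ℕ) (u : V) :
    inB sideV depth u ↔ (if sideV u = true then Even (depth u) else Odd (depth u)) := by
  cases h : sideV u <;> simp [inB, h]

theorem welded_tree_linear_transduction
    (n : ℕ) (hn : Odd n)
    (sideV : V → Bool) (depth : V → ℕ) (hdepth : ∀ u, depth u ≤ n)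
    (lay : E → ℕ) (sideE : E → Bool) (ep0 ep1 : E → V)
    (hlay : ∀ e, 1 ≤ lay e ∧ lay e ≤ n + 1)
    (htree : ∀ e, lay e ≤ n → sideV (ep0 e) = sideE e ∧ depth (ep0 e) = lay e - 1 ∧
        sideV (ep1 e) = sideE e ∧ depth (ep1 e) = lay e)
    (hmid : ∀ e, lay e = n + 1 → sideV (ep0 e) = false ∧ depth (ep0 e) = n ∧
        sideV (ep1 e) = true ∧ depth (ep1 e) = n)
    (s t : V) (hs : sideV s = false ∧ depth s = 0) (ht : sideV t = true ∧ depth t = 0)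
    (hroot : ∀ u, depth u = 0 → (sideV u = false → u = s) ∧ (sideV u = true → u = t))
    (hchild : ∀ u, depth u < n → (Finset.univ.filter fun e => ep0 e = u).card = 2)
    (hparent : ∀ u, 1 ≤ depth u →
        (Finset.univ.filter fun e => lay e ≤ n ∧ ep1 e = u).card = 1)
    (hmidL : ∀ u, sideV u = false → depth u = n →
        (Finset.univ.filter fun e => lay e = n + 1 ∧ ep0 e = u).card = 2)
    (hmidR : ∀ u, sideV u = true → depth u = n →
        (Finset.univ.filter fun e => lay e = n + 1 ∧ ep1 e = u).card = 2)
    (RA RB : EuclideanSpace ℂ (E ⊕ Bool) →ₗ[ℂ] EuclideanSpace ℂ (E ⊕ Bool))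
    (hRAneg : ∀ u, inA sideV depth u → RA (psi ep0 ep1 s t u) = -psi ep0 ep1 s t u)
    (hRAid : ∀ x, (∀ u, inA sideV depth u → (inner ℂ (psi ep0 ep1 s t u) x : ℂ) = 0) → RA x = x)
    (hRBneg : ∀ u, inB sideV depth u → RB (psi ep0 ep1 s t u) = -psi ep0 ep1 s t u)
    (hRBid : ∀ x, (∀ u, inB sideV depth u → (inner ℂ (psi ep0 ep1 s t u) x : ℂ) = 0) → RB x = x) :
    ∃ v ∈ Submodule.span ℂ
        (Set.range (fun e : E => ket (Sum.inl e) : E → EuclideanSpace ℂ (E ⊕ Bool))),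
      ‖v‖ ^ 2 ≤ 3 * (n + 1) ∧
      -(RB (RA (ket (Sum.inr false) + v))) = ket (Sum.inr true) + v := by
  classical
  obtain ⟨nk, hnk⟩ := hn
  have hn1 : 1 ≤ n := by omega
  -- basic edge facts
  have Bout : ∀ e : E, lay e ≤ n → depth (ep0 e) + 1 = lay e ∧ sideV (ep0 e) = sideE e := by
    intro e he
    obtain ⟨h1, h2, _, _⟩ := htree e he
    exact ⟨by have := (hlay e).1; omega, h1⟩
  have Bin : ∀ e : E, lay e ≤ n → depth (ep1 e) = lay e ∧ sideV (ep1 e) = sideE e := by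
    intro e he
    obtain ⟨_, _, h3, h4⟩ := htree e he
    exact ⟨h4, h3⟩
  have Bmid : ∀ e : E, ¬ lay e ≤ n → lay e = n + 1 ∧ sideV (ep0 e) = false ∧
      depth (ep0 e) = n ∧ sideV (ep1 e) = true ∧ depth (ep1 e) = n := by
    intro e he
    have hl : lay e = n + 1 := by have := (hlay e).2; omega
    exact ⟨hl, hmid e hl⟩
  -- the transducing vectors
  set vv : EuclideanSpace ℂ (E ⊕ Bool) := ∑ e : E, alc (lay e) • ket (Sum.inl e) with hvv
  set xx : EuclideanSpace ℂ (E ⊕ Bool) :=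
    ∑ e : E, chc (lay e) (sideE e) • ket (Sum.inl e) with hxx
  have vv_inl : ∀ e : E, vv (Sum.inl e) = alc (lay e) := by
    intro e; rw [hvv, sum_coords]; rfl
  have vv_inr : ∀ b, vv (Sum.inr b) = 0 := by
    intro b; rw [hvv, sum_coords]; rfl
  have xx_inl : ∀ e : E, xx (Sum.inl e) = chc (lay e) (sideE e) := by
    intro e; rw [hxx, sum_coords]; rfl
  have xx_inr : ∀ b, xx (Sum.inr b) = 0 := by
    intro b; rw [hxx, sum_coords]; rfl
  -- filter structure lemmas
  have F1 : ∀ u : V, depth u < n → ∀ e, ep0 e = u → lay e = depth u + 1 ∧ sideE e = sideV u := by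
    intro u hu e he
    rcases le_or_gt (lay e) n with h | h
    · obtain ⟨h1, h2⟩ := Bout e h
      rw [he] at h1 h2
      exact ⟨h1.symm, h2.symm⟩
    · obtain ⟨_, _, h3, _, _⟩ := Bmid e (by omega)
      rw [he] at h3; omega
  have F2 : ∀ u : V, depth u = n → ∀ e, ep0 e = u → lay e = n + 1 := by
    intro u hu e he
    rcases le_or_gt (lay e) n with h | h
    · obtain ⟨h1, _⟩ := Bout e h
      rw [he] at h1; omega
    · exact (Bmid e (by omega)).1
  have F2' : ∀ u : V, depth u = n →
      Finset.univ.filter (fun e => ep0 e = u) =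
        Finset.univ.filter (fun e => lay e = n + 1 ∧ ep0 e = u) := by
    intro u hu
    ext e
    simp only [Finset.mem_filter, Finset.mem_univ, true_and]
    exact ⟨fun h => ⟨F2 u hu e h, h⟩, fun h => h.2⟩
  have F3 : ∀ u : V, sideV u = true → depth u = n →
      Finset.univ.filter (fun e => ep0 e = u) = ∅ := by
    intro u hus hu
    rw [Finset.filter_eq_empty_iff]
    intro e _
    intro he
    have := F2 u hu e he
    have h2 := (Bmid e (by omega)).2.1
    rw [he] at h2
    rw [hus] at h2; exact absurd h2 (by simp)
  have F4 : ∀ u : V, depth u = 0 → Finset.univ.filter (fun e => ep1 e = u) = ∅ := by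
    intro u hu
    rw [Finset.filter_eq_empty_iff]
    intro e _
    intro he
    rcases le_or_gt (lay e) n with h | h
    · have h1 := (Bin e h).1
      rw [he] at h1
      have := (hlay e).1; omega
    · have h1 := (Bmid e (by omega)).2.2.2.2
      rw [he] at h1; omega
  have F5 : ∀ u : V, (depth u < n ∨ sideV u = false) →
      Finset.univ.filter (fun e => ep1 e = u) =
        Finset.univ.filter (fun e => lay e ≤ n ∧ ep1 e = u) := by
    intro u hu
    ext e
    simp only [Finset.mem_filter, Finset.mem_univ, true_and]
    refine ⟨fun h => ⟨?_, h⟩, fun h => h.2⟩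
    by_contra hle
    obtain ⟨_, _, _, h3, h4⟩ := Bmid e hle
    rw [h] at h3 h4
    rcases hu with h5 | h5
    · omega
    · rw [h5] at h3; exact absurd h3 (by simp)
  have F6 : ∀ e : E, lay e ≤ n → ∀ u, ep1 e = u → lay e = depth u ∧ sideE e = sideV u := by
    intro e he u hu
    obtain ⟨h1, h2⟩ := Bin e he
    rw [hu] at h1 h2
    exact ⟨h1.symm, h2.symm⟩
  -- right-leaf in-edge split
  have Fsplit : ∀ u : V, sideV u = true → depth u = n → ∀ g : E → ℂ,
      (∑ e ∈ Finset.univ.filter (fun e => ep1 e = u), g e) =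
        (∑ e ∈ Finset.univ.filter (fun e => lay e ≤ n ∧ ep1 e = u), g e) +
        (∑ e ∈ Finset.univ.filter (fun e => lay e = n + 1 ∧ ep1 e = u), g e) := by
    intro u hus hu g
    rw [← Finset.sum_union]
    · congr 1
      ext e
      simp only [Finset.mem_filter, Finset.mem_univ, true_and, Finset.mem_union]
      constructor
      · intro h
        rcases le_or_gt (lay e) n with hl | hl
        · exact Or.inl ⟨hl, h⟩
        · exact Or.inr ⟨by have := (hlay e).2; omega, h⟩
      · rintro (⟨_, h⟩ | ⟨_, h⟩) <;> exact h
    · rw [Finset.disjoint_left]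
      intro e h1 h2
      simp only [Finset.mem_filter, Finset.mem_univ, true_and] at h1 h2
      omega

  set w1 : EuclideanSpace ℂ (E ⊕ Bool) := ket (Sum.inr false) + vv + xx with hw1
  set w2 : EuclideanSpace ℂ (E ⊕ Bool) := xx - (ket (Sum.inr true) + vv) with hw2
  -- coordinates of the two test vectors
  have w1_inl : ∀ e : E, w1 (Sum.inl e)
      = alc (lay e) + chc (lay e) (sideE e) := by
    intro e
    rw [hw1, add_apply, add_apply, ket_apply, vv_inl, xx_inl]
    simp
  have w1_inrf : w1 (Sum.inr false) = 1 := by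
    rw [hw1, add_apply, add_apply, ket_apply, vv_inr, xx_inr]; simp
  have w1_inrt : w1 (Sum.inr true) = 0 := by
    rw [hw1, add_apply, add_apply, ket_apply, vv_inr, xx_inr]; simp
  have w2_inl : ∀ e : E, w2 (Sum.inl e)
      = chc (lay e) (sideE e) - alc (lay e) := by
    intro e
    rw [hw2, sub_apply, add_apply, ket_apply, vv_inl, xx_inl]
    simp
  have w2_inrf : w2 (Sum.inr false) = 0 := by
    rw [hw2, sub_apply, add_apply, ket_apply, vv_inr, xx_inr]; simp
  have w2_inrt : w2 (Sum.inr true) = -1 := by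
    rw [hw2, sub_apply, add_apply, ket_apply, vv_inr, xx_inr]; simp
  have hEn1 : Even (n+1) := ⟨nk+1, by omega⟩
  -- orthogonality of psi_u, u ∈ A, to  ψ + χ
  have keyA : ∀ u, inA sideV depth u →
      (inner ℂ (psi ep0 ep1 s t u) w1 : ℂ) = 0 := by
    intro u hu
    rw [inner_psi]
    rcases hu with ⟨hside, heven⟩ | ⟨hside, hodd⟩
    · -- left side, even depth
      have hne : depth u ≠ n := by
        intro h; rw [h, hnk] at heven; exact not_even_odd heven
      have hlt : depth u < n := lt_of_le_of_ne (hdepth u) hne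
      obtain ⟨k, hk⟩ := heven
      have hut : u ≠ t := by
        intro h; rw [h, ht.1] at hside; exact absurd hside (by simp)
      have hout : (∑ e ∈ Finset.univ.filter (fun e => ep0 e = u),
          w1 (Sum.inl e)) = 2 * qc ^ (k+1) := by
        have hval : ∀ e ∈ Finset.univ.filter (fun e => ep0 e = u),
            w1 (Sum.inl e) = qc ^ (k+1) := by
          intro e he
          rw [Finset.mem_filter] at he
          obtain ⟨hl, hσ⟩ := F1 u hlt e he.2
          rw [w1_inl e, hσ, hside, LP, hl]
          congr 1
          omega
        rw [sum_const_val _ _ _ hval, hchild u hlt]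
        norm_num
      rcases Nat.eq_zero_or_pos (depth u) with h0 | h1
      · have hus : u = s := (hroot u h0).1 hside
        rw [hout, F4 u h0, Finset.sum_empty, if_pos hus, if_neg hut, w1_inrf]
        have hk0 : k = 0 := by omega
        rw [hk0]
        norm_num [qc]
      · have hus : u ≠ s := by intro h; rw [h, hs.2] at h1; omega
        have hin : (∑ e ∈ Finset.univ.filter (fun e => ep1 e = u),
            w1 (Sum.inl e)) = qc ^ k := by
          have hval : ∀ e ∈ Finset.univ.filter (fun e => lay e ≤ n ∧ ep1 e = u),
              w1 (Sum.inl e) = qc ^ k := by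
            intro e he
            rw [Finset.mem_filter] at he
            obtain ⟨hl, hσ⟩ := F6 e he.2.1 u he.2.2
            rw [w1_inl e, hσ, hside, LP, hl]
            congr 1
            omega
          rw [F5 u (Or.inl hlt), sum_const_val _ _ _ hval, hparent u h1]
          norm_num
        rw [hout, hin, if_neg hus, if_neg hut]
        linear_combination (qc ^ k) * qc_rec
    · -- right side, odd depth
      have hus : u ≠ s := by
        intro h; rw [h, hs.1] at hside; exact absurd hside (by simp)
      obtain ⟨k, hk⟩ := hodd
      have h1 : 1 ≤ depth u := by omega
      have hut : u ≠ t := by intro h; rw [h, ht.2] at h1; omega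
      rcases lt_or_eq_of_le (hdepth u) with hlt | heq
      · have hout : (∑ e ∈ Finset.univ.filter (fun e => ep0 e = u),
            w1 (Sum.inl e)) = 2 * qc ^ (k+1) := by
          have hval : ∀ e ∈ Finset.univ.filter (fun e => ep0 e = u),
              w1 (Sum.inl e) = qc ^ (k+1) := by
            intro e he
            rw [Finset.mem_filter] at he
            obtain ⟨hl, hσ⟩ := F1 u hlt e he.2
            rw [w1_inl e, hσ, hside, LS, hl]
            congr 1
            omega
          rw [sum_const_val _ _ _ hval, hchild u hlt]
          norm_num
        have hin : (∑ e ∈ Finset.univ.filter (fun e => ep1 e = u),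
            w1 (Sum.inl e)) = qc ^ k := by
          have hval : ∀ e ∈ Finset.univ.filter (fun e => lay e ≤ n ∧ ep1 e = u),
              w1 (Sum.inl e) = qc ^ k := by
            intro e he
            rw [Finset.mem_filter] at he
            obtain ⟨hl, hσ⟩ := F6 e he.2.1 u he.2.2
            rw [w1_inl e, hσ, hside, LS, hl]
            congr 1
            omega
          rw [F5 u (Or.inl hlt), sum_const_val _ _ _ hval, hparent u h1]
          norm_num
        rw [hout, hin, if_neg hus, if_neg hut]
        linear_combination (qc ^ k) * qc_rec
      · -- right leaf
        rw [F3 u hside heq, Finset.sum_empty, Fsplit u hside heq]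
        have htv : ∀ e ∈ Finset.univ.filter (fun e => lay e ≤ n ∧ ep1 e = u),
            w1 (Sum.inl e) = qc ^ k := by
          intro e he
          rw [Finset.mem_filter] at he
          obtain ⟨hl, hσ⟩ := F6 e he.2.1 u he.2.2
          rw [w1_inl e, hσ, hside, LS, hl, heq]
          congr 1
          omega
        have hmv : ∀ e ∈ Finset.univ.filter (fun e => lay e = n + 1 ∧ ep1 e = u),
            w1 (Sum.inl e) = qc ^ (k+1) := by
          intro e he
          rw [Finset.mem_filter] at he
          rw [w1_inl e, he.2.1, chc_even hEn1 _, add_zero, alc_even hEn1]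
          congr 1
          omega
        rw [sum_const_val _ _ _ htv, sum_const_val _ _ _ hmv, hparent u h1,
          hmidR u hside heq, if_neg hus, if_neg hut]
        push_cast
        linear_combination (qc ^ k) * qc_rec
  -- orthogonality of psi_u, u ∈ B, to χ − φ
  have keyB : ∀ u, inB sideV depth u →
      (inner ℂ (psi ep0 ep1 s t u) w2 : ℂ) = 0 := by
    intro u hu
    rw [inner_psi]
    rcases hu with ⟨hside, hodd⟩ | ⟨hside, heven⟩
    · -- left side, odd depth
      have hus : u ≠ s := by
        intro h; rw [h, hs.2] at hodd; exact absurd hodd (by simp [Nat.odd_iff])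
      have hut : u ≠ t := by
        intro h; rw [h, ht.1] at hside; exact absurd hside (by simp)
      obtain ⟨k, hk⟩ := hodd
      have h1 : 1 ≤ depth u := by omega
      rcases lt_or_eq_of_le (hdepth u) with hlt | heq
      · have hout : (∑ e ∈ Finset.univ.filter (fun e => ep0 e = u),
            w2 (Sum.inl e)) = 2 * (-qc ^ (k+1)) := by
          have hval : ∀ e ∈ Finset.univ.filter (fun e => ep0 e = u),
              w2 (Sum.inl e) = -qc ^ (k+1) := by
            intro e he
            rw [Finset.mem_filter] at he
            obtain ⟨hl, hσ⟩ := F1 u hlt e he.2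
            rw [w2_inl e, hσ, hside, LQ, hl]
            congr 2
            omega
          rw [sum_const_val _ _ _ hval, hchild u hlt]
          norm_num
        have hin : (∑ e ∈ Finset.univ.filter (fun e => ep1 e = u),
            w2 (Sum.inl e)) = -qc ^ k := by
          have hval : ∀ e ∈ Finset.univ.filter (fun e => lay e ≤ n ∧ ep1 e = u),
              w2 (Sum.inl e) = -qc ^ k := by
            intro e he
            rw [Finset.mem_filter] at he
            obtain ⟨hl, hσ⟩ := F6 e he.2.1 u he.2.2
            rw [w2_inl e, hσ, hside, LQ, hl]
            congr 2
            omega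
          rw [F5 u (Or.inl hlt), sum_const_val _ _ _ hval, hparent u h1]
          norm_num
        rw [hout, hin, if_neg hus, if_neg hut]
        linear_combination (-qc ^ k) * qc_rec
      · -- left leaf
        have hout : (∑ e ∈ Finset.univ.filter (fun e => ep0 e = u),
            w2 (Sum.inl e)) = 2 * (-qc ^ (k+1)) := by
          rw [F2' u heq]
          have hval : ∀ e ∈ Finset.univ.filter (fun e => lay e = n + 1 ∧ ep0 e = u),
              w2 (Sum.inl e) = -qc ^ (k+1) := by
            intro e he
            rw [Finset.mem_filter] at he
            rw [w2_inl e, he.2.1, chc_even hEn1 _, alc_even hEn1, zero_sub]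
            congr 2
            omega
          rw [sum_const_val _ _ _ hval, hmidL u hside heq]
          norm_num
        have hin : (∑ e ∈ Finset.univ.filter (fun e => ep1 e = u),
            w2 (Sum.inl e)) = -qc ^ k := by
          have hval : ∀ e ∈ Finset.univ.filter (fun e => lay e ≤ n ∧ ep1 e = u),
              w2 (Sum.inl e) = -qc ^ k := by
            intro e he
            rw [Finset.mem_filter] at he
            obtain ⟨hl, hσ⟩ := F6 e he.2.1 u he.2.2
            rw [w2_inl e, hσ, hside, LQ, hl, heq]
            congr 2
            omega
          rw [F5 u (Or.inr hside), sum_const_val _ _ _ hval, hparent u h1]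
          norm_num
        rw [hout, hin, if_neg hus, if_neg hut]
        linear_combination (-qc ^ k) * qc_rec
    · -- right side, even depth
      have hus : u ≠ s := by
        intro h; rw [h, hs.1] at hside; exact absurd hside (by simp)
      obtain ⟨k, hk⟩ := heven
      have hne : depth u ≠ n := by
        intro h; rw [hnk] at h; omega
      have hlt : depth u < n := lt_of_le_of_ne (hdepth u) hne
      have hout : (∑ e ∈ Finset.univ.filter (fun e => ep0 e = u),
          w2 (Sum.inl e)) = 2 * (-qc ^ (k+1)) := by
        have hval : ∀ e ∈ Finset.univ.filter (fun e => ep0 e = u),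
            w2 (Sum.inl e) = -qc ^ (k+1) := by
          intro e he
          rw [Finset.mem_filter] at he
          obtain ⟨hl, hσ⟩ := F1 u hlt e he.2
          rw [w2_inl e, hσ, hside, LT, hl]
          congr 2
          omega
        rw [sum_const_val _ _ _ hval, hchild u hlt]
        norm_num
      rcases Nat.eq_zero_or_pos (depth u) with h0 | h1
      · have hutt : u = t := (hroot u h0).2 hside
        rw [hout, F4 u h0, Finset.sum_empty, if_neg hus, if_pos hutt, w2_inrt]
        have hk0 : k = 0 := by omega
        rw [hk0]
        norm_num [qc]
      · have hut : u ≠ t := by intro h; rw [h, ht.2] at h1; omega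
        have hin : (∑ e ∈ Finset.univ.filter (fun e => ep1 e = u),
            w2 (Sum.inl e)) = -qc ^ k := by
          have hval : ∀ e ∈ Finset.univ.filter (fun e => lay e ≤ n ∧ ep1 e = u),
              w2 (Sum.inl e) = -qc ^ k := by
            intro e he
            rw [Finset.mem_filter] at he
            obtain ⟨hl, hσ⟩ := F6 e he.2.1 u he.2.2
            rw [w2_inl e, hσ, hside, LT, hl]
            congr 2
            omega
          rw [F5 u (Or.inl hlt), sum_const_val _ _ _ hval, hparent u h1]
          norm_num
        rw [hout, hin, if_neg hus, if_neg hut]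
        linear_combination (-qc ^ k) * qc_rec

  -- membership decisions
  have notA_leftodd : ∀ w : V, sideV w = false → ¬ Even (depth w) → ¬ inA sideV depth w := by
    rintro w h1 h2 (⟨_, h⟩ | ⟨h, _⟩)
    · exact h2 h
    · rw [h1] at h; exact absurd h (by simp)
  have notA_righteven : ∀ w : V, sideV w = true → Even (depth w) → ¬ inA sideV depth w := by
    rintro w h1 h2 (⟨h, _⟩ | ⟨_, h⟩)
    · rw [h1] at h; exact absurd h (by simp)
    · rw [Nat.odd_iff] at h; rw [Nat.even_iff] at h2; omega
  have notB_lefteven : ∀ w : V, sideV w = false → Even (depth w) → ¬ inB sideV depth w := by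
    rintro w h1 h2 (⟨_, h⟩ | ⟨h, _⟩)
    · rw [Nat.odd_iff] at h; rw [Nat.even_iff] at h2; omega
    · rw [h1] at h; exact absurd h (by simp)
  have notB_rightodd : ∀ w : V, sideV w = true → ¬ Even (depth w) → ¬ inB sideV depth w := by
    rintro w h1 h2 (⟨h, _⟩ | ⟨_, h⟩)
    · rw [h1] at h; exact absurd h (by simp)
    · exact h2 h
  have evk : ∀ m : ℕ, Even (m + m) := fun m => ⟨m, rfl⟩
  have oddk : ∀ m : ℕ, ¬ Even (2*m+1) := fun m => not_even_odd
  -- span decomposition ψ − χ over A-stars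
  set ya : EuclideanSpace ℂ (E ⊕ Bool) := ket (Sum.inr false) + vv - xx with hyadef
  set zc : EuclideanSpace ℂ (E ⊕ Bool) := xx + (ket (Sum.inr true) + vv) with hzcdef
  have ya_inl : ∀ e : E, ya (Sum.inl e) = alc (lay e) - chc (lay e) (sideE e) := by
    intro e
    rw [hyadef, sub_apply, add_apply, ket_apply, vv_inl, xx_inl]
    simp
  have ya_inrf : ya (Sum.inr false) = 1 := by
    rw [hyadef, sub_apply, add_apply, ket_apply, vv_inr, xx_inr]; simp
  have ya_inrt : ya (Sum.inr true) = 0 := by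
    rw [hyadef, sub_apply, add_apply, ket_apply, vv_inr, xx_inr]; simp
  have zc_inl : ∀ e : E, zc (Sum.inl e) = chc (lay e) (sideE e) + alc (lay e) := by
    intro e
    rw [hzcdef, add_apply, add_apply, ket_apply, vv_inl, xx_inl]
    simp
  have zc_inrf : zc (Sum.inr false) = 0 := by
    rw [hzcdef, add_apply, add_apply, ket_apply, vv_inr, xx_inr]; simp
  have zc_inrt : zc (Sum.inr true) = 1 := by
    rw [hzcdef, add_apply, add_apply, ket_apply, vv_inr, xx_inr]; simp
  have span_a : ya = ∑ u ∈ Finset.univ.filter (fun u => inA sideV depth u),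
      (qc ^ ((depth u + 1)/2)) • psi ep0 ep1 s t u := by
    ext x
    rw [sum_apply']
    cases x with
    | inl e =>
      rw [ya_inl e]
      simp only [smul_apply, psi_apply_inl, mul_add, mul_ite, mul_one, mul_zero,
        Finset.sum_add_distrib, Finset.sum_ite_eq, Finset.mem_filter, Finset.mem_univ, true_and]
      rcases le_or_gt (lay e) n with hle | hgt
      · obtain ⟨hd0, hs0⟩ := Bout e hle
        obtain ⟨hd1, hs1⟩ := Bin e hle
        cases hσ : sideE e with
        | false =>
          have hv0 : sideV (ep0 e) = false := by rw [hs0, hσ]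
          have hv1 : sideV (ep1 e) = false := by rw [hs1, hσ]
          rcases Nat.even_or_odd (depth (ep0 e)) with ⟨k, hk⟩ | ⟨k, hk⟩
          · rw [if_pos (show inA sideV depth (ep0 e) from Or.inl ⟨hv0, ⟨k, hk⟩⟩), if_neg (notA_leftodd _ hv1
              (by rw [Nat.even_iff]; omega))]
            have e1 : (depth (ep0 e) + 1)/2 = k := by omega
            have e2 : lay e = k + k + 1 := by omega
            have e3 : (k+k+1)/2 = k := by omega
            have h := LQ (k+k+1)
            rw [e3] at h
            rw [e1, e2, add_zero]
            linear_combination -h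
          · rw [if_neg (notA_leftodd _ hv0 (by rw [Nat.even_iff]; omega)),
              if_pos (show inA sideV depth (ep1 e) from Or.inl ⟨hv1, by rw [hd1]; exact ⟨k+1, by omega⟩⟩)]
            have e1 : (depth (ep1 e) + 1)/2 = k + 1 := by omega
            have e2 : lay e = 2*k + 2 := by omega
            have e3 : (2*k+2)/2 = k + 1 := by omega
            have h := LQ (2*k+2)
            rw [e3] at h
            rw [e1, e2, zero_add]
            linear_combination -h
        | true =>
          have hv0 : sideV (ep0 e) = true := by rw [hs0, hσ]
          have hv1 : sideV (ep1 e) = true := by rw [hs1, hσ]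
          rcases Nat.even_or_odd (depth (ep0 e)) with ⟨k, hk⟩ | ⟨k, hk⟩
          · rw [if_neg (notA_righteven _ hv0 ⟨k, hk⟩),
              if_pos (show inA sideV depth (ep1 e) from Or.inr ⟨hv1, by rw [hd1]; exact ⟨k, by omega⟩⟩)]
            have e1 : (depth (ep1 e) + 1)/2 = k + 1 := by omega
            have e2 : lay e = k + k + 1 := by omega
            have e3 : (k+k+1+1)/2 = k + 1 := by omega
            have h := LT (k+k+1)
            rw [e3] at h
            rw [e1, e2, zero_add]
            linear_combination -h
          · rw [if_pos (show inA sideV depth (ep0 e) from Or.inr ⟨hv0, ⟨k, hk⟩⟩),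
              if_neg (notA_righteven _ hv1 (by rw [hd1]; exact ⟨k+1, by omega⟩))]
            have e1 : (depth (ep0 e) + 1)/2 = k + 1 := by omega
            have e2 : lay e = 2*k + 2 := by omega
            have e3 : (2*k+2+1)/2 = k + 1 := by omega
            have h := LT (2*k+2)
            rw [e3] at h
            rw [e1, e2, add_zero]
            linear_combination -h
      · obtain ⟨hl, hm0s, hm0d, hm1s, hm1d⟩ := Bmid e (by omega)
        rw [if_neg (notA_leftodd _ hm0s (by rw [hm0d, Nat.even_iff]; omega)),
          if_pos (show inA sideV depth (ep1 e) from Or.inr ⟨hm1s, by rw [hm1d, hnk]; exact ⟨nk, rfl⟩⟩)]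
        have e1 : (depth (ep1 e) + 1)/2 = nk + 1 := by omega
        rw [e1, hl, chc_even hEn1 _, alc_even hEn1, zero_add, sub_zero]
        congr 1
        omega
    | inr b =>
      cases b with
      | false =>
        rw [ya_inrf]
        simp only [smul_apply, psi_apply_inrf, mul_ite, mul_one, mul_zero, Finset.sum_ite_eq',
          Finset.mem_filter, Finset.mem_univ, true_and]
        rw [if_pos (show inA sideV depth s from Or.inl ⟨hs.1, by rw [hs.2]; exact Even.zero⟩)]
        rw [hs.2]
        norm_num
      | true =>
        rw [ya_inrt]
        simp only [smul_apply, psi_apply_inrt, mul_ite, mul_one, mul_zero, Finset.sum_ite_eq',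
          Finset.mem_filter, Finset.mem_univ, true_and]
        rw [if_neg (notA_righteven _ ht.1 (by rw [ht.2]; exact Even.zero))]
  -- span decomposition χ + φ over B-stars
  have span_c : zc = ∑ u ∈ Finset.univ.filter (fun u => inB sideV depth u),
      (qc ^ ((depth u + 1)/2)) • psi ep0 ep1 s t u := by
    ext x
    rw [sum_apply']
    cases x with
    | inl e =>
      rw [zc_inl e]
      simp only [smul_apply, psi_apply_inl, mul_add, mul_ite, mul_one, mul_zero,
        Finset.sum_add_distrib, Finset.sum_ite_eq, Finset.mem_filter, Finset.mem_univ, true_and]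
      rcases le_or_gt (lay e) n with hle | hgt
      · obtain ⟨hd0, hs0⟩ := Bout e hle
        obtain ⟨hd1, hs1⟩ := Bin e hle
        cases hσ : sideE e with
        | false =>
          have hv0 : sideV (ep0 e) = false := by rw [hs0, hσ]
          have hv1 : sideV (ep1 e) = false := by rw [hs1, hσ]
          rcases Nat.even_or_odd (depth (ep0 e)) with ⟨k, hk⟩ | ⟨k, hk⟩
          · rw [if_neg (notB_lefteven _ hv0 ⟨k, hk⟩),
              if_pos (show inB sideV depth (ep1 e) from Or.inl ⟨hv1, by rw [hd1, Nat.odd_iff]; omega⟩)]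
            have e1 : (depth (ep1 e) + 1)/2 = k + 1 := by omega
            have e2 : lay e = k + k + 1 := by omega
            have e3 : (k+k+1+1)/2 = k + 1 := by omega
            have h := LP (k+k+1)
            rw [e3] at h
            rw [e1, e2, zero_add]
            linear_combination h
          · rw [if_pos (show inB sideV depth (ep0 e) from Or.inl ⟨hv0, by rw [Nat.odd_iff]; omega⟩),
              if_neg (notB_lefteven _ hv1 (by rw [hd1]; exact ⟨k+1, by omega⟩))]
            have e1 : (depth (ep0 e) + 1)/2 = k + 1 := by omega
            have e2 : lay e = 2*k + 2 := by omega
            have e3 : (2*k+2+1)/2 = k + 1 := by omega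
            have h := LP (2*k+2)
            rw [e3] at h
            rw [e1, e2, add_zero]
            linear_combination h
        | true =>
          have hv0 : sideV (ep0 e) = true := by rw [hs0, hσ]
          have hv1 : sideV (ep1 e) = true := by rw [hs1, hσ]
          rcases Nat.even_or_odd (depth (ep0 e)) with ⟨k, hk⟩ | ⟨k, hk⟩
          · rw [if_pos (show inB sideV depth (ep0 e) from Or.inr ⟨hv0, ⟨k, hk⟩⟩),
              if_neg (notB_rightodd _ hv1 (by rw [hd1, Nat.even_iff]; omega))]
            have e1 : (depth (ep0 e) + 1)/2 = k := by omega
            have e2 : lay e = k + k + 1 := by omega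
            have e3 : (k+k+1)/2 = k := by omega
            have h := LS (k+k+1)
            rw [e3] at h
            rw [e1, e2, add_zero]
            linear_combination h
          · rw [if_neg (notB_rightodd _ hv0 (by rw [Nat.even_iff]; omega)),
              if_pos (show inB sideV depth (ep1 e) from Or.inr ⟨hv1, by rw [hd1]; exact ⟨k+1, by omega⟩⟩)]
            have e1 : (depth (ep1 e) + 1)/2 = k + 1 := by omega
            have e2 : lay e = 2*k + 2 := by omega
            have e3 : (2*k+2)/2 = k + 1 := by omega
            have h := LS (2*k+2)
            rw [e3] at h
            rw [e1, e2, zero_add]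
            linear_combination h
      · obtain ⟨hl, hm0s, hm0d, hm1s, hm1d⟩ := Bmid e (by omega)
        rw [if_pos (show inB sideV depth (ep0 e) from Or.inl ⟨hm0s, by rw [hm0d, Nat.odd_iff]; omega⟩),
          if_neg (notB_rightodd _ hm1s (by rw [hm1d, Nat.even_iff]; omega))]
        have e1 : (depth (ep0 e) + 1)/2 = nk + 1 := by omega
        rw [e1, hl, chc_even hEn1 _, alc_even hEn1, zero_add, add_zero]
        congr 1
        omega
    | inr b =>
      cases b with
      | false =>
        rw [zc_inrf]
        simp only [smul_apply, psi_apply_inrf, mul_ite, mul_one, mul_zero, Finset.sum_ite_eq',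
          Finset.mem_filter, Finset.mem_univ, true_and]
        rw [if_neg (notB_lefteven _ hs.1 (by rw [hs.2]; exact Even.zero))]
      | true =>
        rw [zc_inrt]
        simp only [smul_apply, psi_apply_inrt, mul_ite, mul_one, mul_zero, Finset.sum_ite_eq',
          Finset.mem_filter, Finset.mem_univ, true_and]
        rw [if_pos (show inB sideV depth t from Or.inr ⟨ht.1, by rw [ht.2]; exact Even.zero⟩)]
        rw [ht.2]
        norm_num

  -- R_A maps ψ to χ
  have keyAh : RA w1 = w1 := hRAid w1 keyA
  have RAneg : RA ya = -ya := by
    rw [span_a, map_sum]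
    rw [Finset.sum_congr rfl (fun u hu => by
      rw [map_smul, hRAneg u (by rw [Finset.mem_filter] at hu; exact hu.2), smul_neg]),
      Finset.sum_neg_distrib, ← span_a]
  have hRAv : RA (ket (Sum.inr false) + vv) = xx := by
    have hadd : RA (ya + w1) = -ya + w1 := by rw [map_add, RAneg, keyAh]
    have h4 : ya + w1 = (2:ℂ) • (ket (Sum.inr false) + vv) := by
      rw [hyadef, hw1]; module
    have h5 : -ya + w1 = (2:ℂ) • xx := by
      rw [hyadef, hw1]; module
    rw [h4, h5, map_smul] at hadd
    exact smul_right_injective _ (two_ne_zero (α := ℂ)) hadd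
  -- R_B maps χ to −φ
  have keyBh : RB w2 = w2 := hRBid w2 keyB
  have RBneg : RB zc = -zc := by
    rw [span_c, map_sum]
    rw [Finset.sum_congr rfl (fun u hu => by
      rw [map_smul, hRBneg u (by rw [Finset.mem_filter] at hu; exact hu.2), smul_neg]),
      Finset.sum_neg_distrib, ← span_c]
  have hRBv : RB xx = -(ket (Sum.inr true) + vv) := by
    have hadd : RB (zc + w2) = -zc + w2 := by rw [map_add, RBneg, keyBh]
    have h4 : zc + w2 = (2:ℂ) • xx := by
      rw [hzcdef, hw2]; module
    have h5 : -zc + w2 = (2:ℂ) • (-(ket (Sum.inr true) + vv)) := by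
      rw [hzcdef, hw2]; module
    rw [h4, h5, map_smul] at hadd
    exact smul_right_injective _ (two_ne_zero (α := ℂ)) hadd
  -- cardinality bounds
  have Db : ∀ j, j ≤ n → ((Finset.univ.filter fun u => depth u = j).card ≤ 2^(j+1)) := by
    intro j
    induction j with
    | zero =>
      intro _
      have hsub : (Finset.univ.filter fun u => depth u = 0) ⊆ ({s, t} : Finset V) := by
        intro u hu
        rw [Finset.mem_filter] at hu
        cases hbu : sideV u with
        | false =>
          exact Finset.mem_insert.mpr (Or.inl ((hroot u hu.2).1 hbu))
        | true =>
          exact Finset.mem_insert.mpr (Or.inr (Finset.mem_singleton.mpr ((hroot u hu.2).2 hbu)))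
      refine (Finset.card_le_card hsub).trans ?_
      refine (Finset.card_insert_le _ _).trans ?_
      simp
    | succ j ih =>
      intro hj
      have hA : (Finset.univ.filter (fun e : E => lay e ≤ n ∧ depth (ep1 e) = j+1)).card
          = ∑ u ∈ Finset.univ.filter (fun u => depth u = j+1),
            ((Finset.univ.filter (fun e : E => lay e ≤ n ∧ depth (ep1 e) = j+1)).filter
              (fun e => ep1 e = u)).card :=
        Finset.card_eq_sum_card_fiberwise (by
          intro e he
          rw [Finset.mem_coe, Finset.mem_filter] at he
          rw [Finset.mem_coe, Finset.mem_filter]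
          exact ⟨Finset.mem_univ _, he.2.2⟩)
      have hB : ∀ u ∈ Finset.univ.filter (fun u => depth u = j+1),
          ((Finset.univ.filter (fun e : E => lay e ≤ n ∧ depth (ep1 e) = j+1)).filter
            (fun e => ep1 e = u)).card = 1 := by
        intro u hu
        rw [Finset.mem_filter] at hu
        have heq : (Finset.univ.filter (fun e : E => lay e ≤ n ∧ depth (ep1 e) = j+1)).filter
            (fun e => ep1 e = u) = Finset.univ.filter (fun e => lay e ≤ n ∧ ep1 e = u) := by
          ext e
          simp only [Finset.filter_filter, Finset.mem_filter, Finset.mem_univ, true_and]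
          constructor
          · rintro ⟨⟨h1, _⟩, h3⟩; exact ⟨h1, h3⟩
          · rintro ⟨h1, h2⟩; exact ⟨⟨h1, by rw [h2, hu.2]⟩, h2⟩
        rw [heq, hparent u (by omega)]
      have hcard1 : (Finset.univ.filter fun u => depth u = j+1).card
          = (Finset.univ.filter (fun e : E => lay e ≤ n ∧ depth (ep1 e) = j+1)).card := by
        rw [hA, Finset.sum_congr rfl hB, Finset.sum_const, smul_eq_mul, mul_one]
      have hC : (Finset.univ.filter (fun e : E => lay e ≤ n ∧ depth (ep1 e) = j+1)).card
          = ∑ u ∈ Finset.univ.filter (fun u => depth u = j),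
            ((Finset.univ.filter (fun e : E => lay e ≤ n ∧ depth (ep1 e) = j+1)).filter
              (fun e => ep0 e = u)).card :=
        Finset.card_eq_sum_card_fiberwise (by
          intro e he
          rw [Finset.mem_coe, Finset.mem_filter] at he
          obtain ⟨hd0, _⟩ := Bout e he.2.1
          obtain ⟨hd1, _⟩ := Bin e he.2.1
          rw [Finset.mem_coe, Finset.mem_filter]
          exact ⟨Finset.mem_univ _, by omega⟩)
      have hD : ∀ u ∈ Finset.univ.filter (fun u => depth u = j),
          ((Finset.univ.filter (fun e : E => lay e ≤ n ∧ depth (ep1 e) = j+1)).filter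
            (fun e => ep0 e = u)).card ≤ 2 := by
        intro u hu
        rw [Finset.mem_filter] at hu
        refine le_trans (Finset.card_le_card ?_) (le_of_eq (hchild u (by omega)))
        intro e he
        rw [Finset.mem_filter] at he ⊢
        exact ⟨Finset.mem_univ _, he.2⟩
      calc (Finset.univ.filter fun u => depth u = j+1).card
          = (Finset.univ.filter (fun e : E => lay e ≤ n ∧ depth (ep1 e) = j+1)).card := hcard1
        _ = ∑ u ∈ Finset.univ.filter (fun u => depth u = j),
            ((Finset.univ.filter (fun e : E => lay e ≤ n ∧ depth (ep1 e) = j+1)).filter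
              (fun e => ep0 e = u)).card := hC
        _ ≤ ∑ u ∈ Finset.univ.filter (fun u => depth u = j), 2 := Finset.sum_le_sum hD
        _ = (Finset.univ.filter fun u => depth u = j).card * 2 := by
            rw [Finset.sum_const, smul_eq_mul]
        _ ≤ 2^(j+1) * 2 := Nat.mul_le_mul_right 2 (ih (by omega))
        _ = 2^(j+1+1) := (pow_succ 2 (j+1)).symm
  have Lb : ∀ j, 1 ≤ j → j ≤ n+1 → ((Finset.univ.filter fun e => lay e = j).card ≤ 2^(j+1)) := by
    intro j h1 h2
    have hE : (Finset.univ.filter fun e => lay e = j).card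
        = ∑ u ∈ Finset.univ.filter (fun u => depth u = j - 1),
          ((Finset.univ.filter fun e => lay e = j).filter (fun e => ep0 e = u)).card :=
      Finset.card_eq_sum_card_fiberwise (by
        intro e he
        rw [Finset.mem_coe, Finset.mem_filter] at he
        rw [Finset.mem_coe, Finset.mem_filter]
        refine ⟨Finset.mem_univ _, ?_⟩
        rcases le_or_gt (lay e) n with hl | hl
        · obtain ⟨hd0, _⟩ := Bout e hl
          omega
        · obtain ⟨hl', _, hd0, _, _⟩ := Bmid e (by omega)
          omega)
    rw [hE]
    have hD2 : ∀ u ∈ Finset.univ.filter (fun u => depth u = j - 1),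
        ((Finset.univ.filter fun e => lay e = j).filter (fun e => ep0 e = u)).card ≤ 2 := by
      intro u hu
      rw [Finset.mem_filter] at hu
      rcases le_or_gt j n with hj | hj
      · refine le_trans (Finset.card_le_card ?_) (le_of_eq (hchild u (by omega)))
        intro e he
        rw [Finset.mem_filter] at he ⊢
        exact ⟨Finset.mem_univ _, he.2⟩
      · have hjn : j = n + 1 := by omega
        have hdu : depth u = n := by omega
        cases hbu : sideV u with
        | false =>
          refine le_of_eq ?_
          rw [← hmidL u hbu hdu]
          congr 1
          ext e
          simp only [Finset.filter_filter, Finset.mem_filter, Finset.mem_univ, true_and, hjn]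
        | true =>
          have hempty : (Finset.univ.filter fun e => lay e = j).filter (fun e => ep0 e = u)
              = ∅ := by
            rw [Finset.filter_filter, Finset.filter_eq_empty_iff]
            rintro e - ⟨hle, hee⟩
            have := (hmid e (by omega)).1
            rw [hee, hbu] at this
            exact absurd this (by simp)
          rw [hempty]
          simp
    calc (∑ u ∈ Finset.univ.filter (fun u => depth u = j - 1),
          ((Finset.univ.filter fun e => lay e = j).filter (fun e => ep0 e = u)).card)
        ≤ ∑ u ∈ Finset.univ.filter (fun u => depth u = j - 1), 2 := Finset.sum_le_sum hD2
      _ = (Finset.univ.filter fun u => depth u = j - 1).card * 2 := by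
          rw [Finset.sum_const, smul_eq_mul]
      _ ≤ 2^(j-1+1) * 2 := Nat.mul_le_mul_right 2 (Db (j-1) (by omega))
      _ ≤ 2^(j+1) := by
          have : j - 1 + 1 = j := by omega
          rw [this, ← pow_succ]
  -- norm bound
  have hnorm : ‖vv‖^2 ≤ 3 * ((n:ℝ) + 1) := by
    rw [normsq, Fintype.sum_sum_type]
    have h2 : ∑ b : Bool, ‖vv (Sum.inr b)‖^2 = 0 := by simp [vv_inr]
    rw [h2, add_zero]
    have hf : ∑ e : E, ‖vv (Sum.inl e)‖^2 =
        ∑ j ∈ Finset.Icc 1 (n+1), ∑ e ∈ Finset.univ.filter (fun e => lay e = j),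
          ‖vv (Sum.inl e)‖^2 :=
      (Finset.sum_fiberwise_of_maps_to (fun e _ => by
        rw [Finset.mem_Icc]; exact hlay e) _).symm
    rw [hf]
    have hb : ∀ j ∈ Finset.Icc 1 (n+1),
        (∑ e ∈ Finset.univ.filter (fun e => lay e = j), ‖vv (Sum.inl e)‖^2) ≤ 2 := by
      intro j hj
      rw [Finset.mem_Icc] at hj
      have hsum : ∑ e ∈ Finset.univ.filter (fun e => lay e = j), ‖vv (Sum.inl e)‖^2
          = ((Finset.univ.filter (fun e => lay e = j)).card : ℝ) * ‖alc j‖^2 :=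
        sum_const_val _ _ _ (fun e he => by
          rw [Finset.mem_filter] at he
          rw [vv_inl, he.2])
      rw [hsum]
      calc ((Finset.univ.filter (fun e => lay e = j)).card : ℝ) * ‖alc j‖^2
          ≤ ((2:ℝ)^(j+1)) * ((1/2:ℝ)^j) := by
            apply mul_le_mul ?_ (alc_sq j) (by positivity) (by positivity)
            exact_mod_cast Lb j hj.1 hj.2
        _ = 2 := by
            rw [one_div, inv_pow, pow_succ, mul_comm ((2:ℝ)^j) 2, mul_assoc,
              mul_inv_cancel₀ (by positivity), mul_one]
    calc (∑ j ∈ Finset.Icc 1 (n+1), ∑ e ∈ Finset.univ.filter (fun e => lay e = j),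
          ‖vv (Sum.inl e)‖^2) ≤ ∑ j ∈ Finset.Icc 1 (n+1), (2:ℝ) := Finset.sum_le_sum hb
      _ = ((n+1 : ℕ) : ℝ) * 2 := by
          rw [Finset.sum_const, Nat.card_Icc, nsmul_eq_mul]
          norm_num
      _ ≤ 3 * ((n:ℝ) + 1) := by
          push_cast
          nlinarith [Nat.cast_nonneg (α := ℝ) n]
  refine ⟨vv, ?_, hnorm, ?_⟩
  · rw [hvv]
    exact Submodule.sum_mem _ (fun e _ =>
      Submodule.smul_mem _ _ (Submodule.subset_span ⟨e, rfl⟩))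
  · rw [hRAv, hRBv, neg_neg]




end Stmt11
end
end

section
/- Let G' be an extended 1-dimensional hierarchical graph with vertex layers S_0, …, S_n and edge layers L_0, L_1, …, L_{n+1}. Then for every i with 0 ≤ i ≤ n, the vector √(W_{i+1}) |L_i⟩ − √(W_i) |L_{i+1}⟩ is orthogonal to ψ_u for every u ∈ S_i. -/
/-!
**Statement 13.**
Let `G'` be an extended 1-dimensional hierarchical graph with vertex layers `S_0, …, S_n` and
edge layers `L_0, L_1, …, L_{n+1}`.  Then for every `i ≤ n`, the vector
`√(W_{i+1}) |L_i⟩ − √(W_i) |L_{i+1}⟩` is orthogonal to `ψ_u` for every `u ∈ S_i`.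

The hierarchical graph is modelled abstractly: vertices `V` carry a layer `vlayer u ≤ n`,
edges `E` carry a layer `elayer e ∈ {1, …, n}` and endpoint maps `lo` (in `S_{elayer e − 1}`)
and `hi` (in `S_{elayer e}`); `s` and `t` are the unique vertices of layers `0` and `n`;
every vertex of `S_i` (`i < n`) has exactly `d⁺_i` up-edges and every vertex of `S_i`
(`i ≥ 1`) has exactly `d⁻_i` down-edges.  The dangling edge `ss'` (layer `L_0`) has weight
`W_0 > 0` and `t't` (layer `L_{n+1}`) has weight `W_{n+1} > 0`; all original edges have
weight 1 and `W_i = |L_i|` for `1 ≤ i ≤ n`.  The walk space is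
`EuclideanSpace ℂ (E ⊕ Bool)` (`Sum.inr false = ss'`, `Sum.inr true = t't`);
`|L_i⟩ = (1/√(W_i)) ∑_{e ∈ L_i} |e⟩` and `ψ_u = ∑_{e ∼ u} √(w_e) |e⟩`.
-/

noncomputable section

namespace Stmt13

variable {V E : Type*} [Fintype V] [Fintype E] [DecidableEq V] [DecidableEq E]

def ket (x : E ⊕ Bool) : EuclideanSpace ℂ (E ⊕ Bool) := EuclideanSpace.single x 1

/-- The weight `W_i` of the `i`-th edge layer: `W_0` and `W_{n+1}` are the weights of the
dangling edges, and `W_i = |L_i|` for `1 ≤ i ≤ n`. -/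
def Wt (n : ℕ) (elayer : E → ℕ) (W0 Wn1 : ℝ) (i : ℕ) : ℝ :=
  if i = 0 then W0 else if i = n + 1 then Wn1
  else ((Finset.univ.filter fun e => elayer e = i).card : ℝ)

/-- The normalized layer-uniform state `|L_i⟩`. -/
def Lket (n : ℕ) (elayer : E → ℕ) (W0 Wn1 : ℝ) (i : ℕ) : EuclideanSpace ℂ (E ⊕ Bool) :=
  if i = 0 then ket (Sum.inr false) else if i = n + 1 then ket (Sum.inr true)
  else ((Real.sqrt (Wt n elayer W0 Wn1 i))⁻¹ : ℂ) •
    ∑ e ∈ Finset.univ.filter (fun e => elayer e = i), ket (Sum.inl e)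

/-- The star state `ψ_u` of a vertex of the extended hierarchical graph. -/
def psi (lo hi : E → V) (s t : V) (W0 Wn1 : ℝ) (u : V) : EuclideanSpace ℂ (E ⊕ Bool) :=
  (∑ e ∈ Finset.univ.filter (fun e => hi e = u), ket (Sum.inl e)) +
  (∑ e ∈ Finset.univ.filter (fun e => lo e = u), ket (Sum.inl e)) +
  (if u = s then (Real.sqrt W0 : ℂ) • ket (Sum.inr false) else 0) +
  (if u = t then (Real.sqrt Wn1 : ℂ) • ket (Sum.inr true) else 0)

lemma inner_ket_ket (x y : E ⊕ Bool) : (inner ℂ (ket x) (ket y) : ℂ) = if x = y then 1 else 0 := by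
  rw [ket, ket, EuclideanSpace.inner_single_left, EuclideanSpace.single_apply]
  simp [eq_comm]

lemma inner_psi_inl (lo hi : E → V) (s t : V) (W0 Wn1 : ℝ) (u : V) (e : E) :
    (inner ℂ (psi lo hi s t W0 Wn1 u) (ket (Sum.inl e)) : ℂ)
      = (if hi e = u then 1 else 0) + (if lo e = u then 1 else 0) := by
  simp only [psi, inner_add_left, sum_inner, inner_smul_left,
    apply_ite (fun v : EuclideanSpace ℂ (E ⊕ Bool) => (inner ℂ v (ket (Sum.inl e)) : ℂ)),
    inner_zero_left, inner_ket_ket]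
  simp [Finset.sum_ite_eq', eq_comm]

lemma inner_psi_false (lo hi : E → V) (s t : V) (W0 Wn1 : ℝ) (u : V) :
    (inner ℂ (psi lo hi s t W0 Wn1 u) (ket (Sum.inr false)) : ℂ)
      = if u = s then (Real.sqrt W0 : ℂ) else 0 := by
  simp only [psi, inner_add_left, sum_inner, inner_smul_left,
    apply_ite (fun v : EuclideanSpace ℂ (E ⊕ Bool) => (inner ℂ v (ket (Sum.inr false)) : ℂ)),
    inner_zero_left, inner_ket_ket]
  simp [Complex.conj_ofReal]

lemma inner_psi_true (lo hi : E → V) (s t : V) (W0 Wn1 : ℝ) (u : V) :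
    (inner ℂ (psi lo hi s t W0 Wn1 u) (ket (Sum.inr true)) : ℂ)
      = if u = t then (Real.sqrt Wn1 : ℂ) else 0 := by
  simp only [psi, inner_add_left, sum_inner, inner_smul_left,
    apply_ite (fun v : EuclideanSpace ℂ (E ⊕ Bool) => (inner ℂ v (ket (Sum.inr true)) : ℂ)),
    inner_zero_left, inner_ket_ket]
  simp [Complex.conj_ofReal]

lemma inner_psi_Lket (lo hi : E → V) (s t : V) (W0 Wn1 : ℝ) (n : ℕ) (elayer : E → ℕ)
    (i : ℕ) (h1 : i ≠ 0) (h2 : i ≠ n + 1) (u : V) :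
    (inner ℂ (psi lo hi s t W0 Wn1 u) (Lket n elayer W0 Wn1 i) : ℂ)
      = ((Real.sqrt (Wt n elayer W0 Wn1 i))⁻¹ : ℂ) *
        (((Finset.univ.filter fun e => elayer e = i ∧ hi e = u).card : ℂ) +
         ((Finset.univ.filter fun e => elayer e = i ∧ lo e = u).card : ℂ)) := by
  rw [Lket, if_neg h1, if_neg h2, inner_smul_right, inner_sum]
  simp only [inner_psi_inl]
  rw [Finset.sum_add_distrib, Finset.sum_boole, Finset.sum_boole,
    Finset.filter_filter, Finset.filter_filter]

lemma sqrt_inv_mul_self {w : ℝ} (hw : 0 ≤ w) : (Real.sqrt w)⁻¹ * w = Real.sqrt w := by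
  rcases eq_or_lt_of_le hw with h | h
  · simp [← h]
  · have hs : Real.sqrt w ≠ 0 := ne_of_gt (Real.sqrt_pos.2 h)
    field_simp
    rw [Real.sq_sqrt hw]

lemma key {a b x y : ℝ} (ha : 0 ≤ a) (hb : 0 ≤ b) (h : b * x = a * y) :
    Real.sqrt b * ((Real.sqrt a)⁻¹ * x) - Real.sqrt a * ((Real.sqrt b)⁻¹ * y) = 0 := by
  rcases eq_or_lt_of_le ha with h1 | h1
  · simp [← h1]
  · rcases eq_or_lt_of_le hb with h2 | h2
    · simp [← h2]
    · have ha' : Real.sqrt a ≠ 0 := ne_of_gt (Real.sqrt_pos.2 h1)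
      have hb' : Real.sqrt b ≠ 0 := ne_of_gt (Real.sqrt_pos.2 h2)
      have hma := Real.mul_self_sqrt ha
      have hmb := Real.mul_self_sqrt hb
      field_simp
      linear_combination x * hmb - y * hma + h

theorem hierarchical_flat_orthogonality
    (n : ℕ) (vlayer : V → ℕ) (elayer : E → ℕ) (lo hi : E → V) (s t : V)
    (W0 Wn1 : ℝ) (hW0 : 0 < W0) (hWn1 : 0 < Wn1)
    (hvl : ∀ u, vlayer u ≤ n)
    (hel : ∀ e, 1 ≤ elayer e ∧ elayer e ≤ n)
    (hlo : ∀ e, vlayer (lo e) = elayer e - 1)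
    (hhi : ∀ e, vlayer (hi e) = elayer e)
    (hs : vlayer s = 0) (hsu : ∀ u, vlayer u = 0 → u = s)
    (ht : vlayer t = n) (htu : ∀ u, vlayer u = n → u = t)
    (dplus dminus : ℕ → ℕ)
    (hdp : ∀ u, vlayer u < n →
        (Finset.univ.filter fun e => lo e = u).card = dplus (vlayer u))
    (hdm : ∀ u, 1 ≤ vlayer u →
        (Finset.univ.filter fun e => hi e = u).card = dminus (vlayer u)) :
    ∀ i ≤ n, ∀ u, vlayer u = i →
      (inner ℂ (psi lo hi s t W0 Wn1 u)
        ((Real.sqrt (Wt n elayer W0 Wn1 (i + 1)) : ℂ) • Lket n elayer W0 Wn1 i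
          - (Real.sqrt (Wt n elayer W0 Wn1 i) : ℂ) • Lket n elayer W0 Wn1 (i + 1)) : ℂ)
        = 0 := by
  intro i hin u hu
  rw [inner_sub_right, inner_smul_right, inner_smul_right]
  by_cases h0 : i = 0
  · subst h0
    have hus : u = s := hsu u hu
    have hL0 : Lket n elayer W0 Wn1 0 = ket (Sum.inr false) := by rw [Lket]; simp
    have hWt0 : Wt n elayer W0 Wn1 0 = W0 := by rw [Wt]; simp
    by_cases hn : n = 0
    · have hut : u = t := htu u (by rw [hu, hn])
      have hL1 : Lket n elayer W0 Wn1 1 = ket (Sum.inr true) := by rw [Lket]; simp [hn]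
      rw [hL0, hL1, inner_psi_false, inner_psi_true, if_pos hus, if_pos hut]
      have hWt1 : Wt n elayer W0 Wn1 1 = Wn1 := by rw [Wt]; simp [hn]
      rw [hWt0, hWt1]; ring
    · rw [hL0, inner_psi_false, if_pos hus,
        inner_psi_Lket lo hi s t W0 Wn1 n elayer 1 one_ne_zero (by omega) u]
      have hX : (Finset.univ.filter fun e => elayer e = 1 ∧ hi e = u) = ∅ := by
        ext e
        simp only [Finset.mem_filter, Finset.mem_univ, true_and, Finset.notMem_empty,
          iff_false, not_and]
        intro h1 h2
        have h3 := hhi e; rw [h2, hu] at h3; omega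
      have hY : (Finset.univ.filter fun e => elayer e = 1 ∧ lo e = u)
          = Finset.univ.filter fun e => elayer e = 1 := by
        ext e
        simp only [Finset.mem_filter, Finset.mem_univ, true_and, and_iff_left_iff_imp]
        intro h1
        rw [hus]; exact hsu _ (by rw [hlo e, h1])
      have hWt1 : Wt n elayer W0 Wn1 1
          = ((Finset.univ.filter fun e => elayer e = 1).card : ℝ) := by
        rw [Wt, if_neg one_ne_zero, if_neg (by omega)]
      rw [hX, hY, hWt0, hWt1]
      have hre : Real.sqrt ((Finset.univ.filter fun e => elayer e = 1).card : ℝ) * Real.sqrt W0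
          - Real.sqrt W0 * ((Real.sqrt ((Finset.univ.filter fun e => elayer e = 1).card : ℝ))⁻¹
            * ((0 : ℝ) + ((Finset.univ.filter fun e => elayer e = 1).card : ℝ))) = 0 := by
        rw [zero_add, sqrt_inv_mul_self (by positivity)]; ring
      simp only [Finset.card_empty, Nat.cast_zero]
      exact_mod_cast hre
  · by_cases hIn : i = n
    · have hut : u = t := htu u (by rw [hu, hIn])
      have hL1 : Lket n elayer W0 Wn1 (i + 1) = ket (Sum.inr true) := by
        rw [Lket]; simp [hIn]
      rw [hL1, inner_psi_true, if_pos hut,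
        inner_psi_Lket lo hi s t W0 Wn1 n elayer i h0 (by omega) u]
      have hX : (Finset.univ.filter fun e => elayer e = i ∧ hi e = u)
          = Finset.univ.filter fun e => elayer e = i := by
        ext e
        simp only [Finset.mem_filter, Finset.mem_univ, true_and, and_iff_left_iff_imp]
        intro h1
        rw [hut]; exact htu _ (by rw [hhi e, h1, hIn])
      have hY : (Finset.univ.filter fun e => elayer e = i ∧ lo e = u) = ∅ := by
        ext e
        simp only [Finset.mem_filter, Finset.mem_univ, true_and, Finset.notMem_empty,
          iff_false, not_and]
        intro h1 h2
        have h3 := hlo e; have h4 := hel e; rw [h2, hu] at h3; omega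
      have hWtn1 : Wt n elayer W0 Wn1 (i + 1) = Wn1 := by
        rw [Wt, if_neg (by omega), if_pos (by omega)]
      have hWti : Wt n elayer W0 Wn1 i
          = ((Finset.univ.filter fun e => elayer e = i).card : ℝ) := by
        rw [Wt, if_neg h0, if_neg (by omega)]
      rw [hX, hY, hWtn1, hWti]
      have hre : Real.sqrt Wn1 * ((Real.sqrt ((Finset.univ.filter fun e => elayer e = i).card : ℝ))⁻¹
            * (((Finset.univ.filter fun e => elayer e = i).card : ℝ) + (0 : ℝ)))
          - Real.sqrt ((Finset.univ.filter fun e => elayer e = i).card : ℝ) * Real.sqrt Wn1 = 0 := by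
        rw [add_zero, sqrt_inv_mul_self (by positivity)]; ring
      simp only [Finset.card_empty, Nat.cast_zero]
      exact_mod_cast hre
    · -- middle case: 1 ≤ i < n
      have hi1 : 1 ≤ i := by omega
      have hiln : i < n := by omega
      rw [inner_psi_Lket lo hi s t W0 Wn1 n elayer i h0 (by omega) u,
        inner_psi_Lket lo hi s t W0 Wn1 n elayer (i + 1) (by omega) (by omega) u]
      have hX : (Finset.univ.filter fun e => elayer e = i ∧ hi e = u)
          = Finset.univ.filter fun e => hi e = u := by
        ext e
        simp only [Finset.mem_filter, Finset.mem_univ, true_and, and_iff_right_iff_imp]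
        intro h1
        rw [← hhi e, h1, hu]
      have hY : (Finset.univ.filter fun e => elayer e = i ∧ lo e = u) = ∅ := by
        ext e
        simp only [Finset.mem_filter, Finset.mem_univ, true_and, Finset.notMem_empty,
          iff_false, not_and]
        intro h1 h2
        have h3 := hlo e; have h4 := hel e; rw [h2, hu] at h3; omega
      have hX' : (Finset.univ.filter fun e => elayer e = i + 1 ∧ hi e = u) = ∅ := by
        ext e
        simp only [Finset.mem_filter, Finset.mem_univ, true_and, Finset.notMem_empty,
          iff_false, not_and]
        intro h1 h2
        have h3 := hhi e; rw [h2, hu] at h3; omega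
      have hY' : (Finset.univ.filter fun e => elayer e = i + 1 ∧ lo e = u)
          = Finset.univ.filter fun e => lo e = u := by
        ext e
        simp only [Finset.mem_filter, Finset.mem_univ, true_and, and_iff_right_iff_imp]
        intro h1
        have h3 := hlo e; have h4 := hel e; rw [h1, hu] at h3; omega
      have hdmu : (Finset.univ.filter fun e => hi e = u).card = dminus i := by
        rw [← hu]; exact hdm u (by omega)
      have hdpu : (Finset.univ.filter fun e => lo e = u).card = dplus i := by
        rw [← hu]; exact hdp u (by omega)
      -- counting lemmas
      have hc1 : (Finset.univ.filter fun e => elayer e = i).card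
          = (Finset.univ.filter fun v => vlayer v = i).card * dminus i := by
        rw [Finset.card_eq_sum_card_fiberwise (f := hi)
          (t := Finset.univ.filter fun v => vlayer v = i)
          (fun e he => by
            simp only [Finset.mem_coe, Finset.mem_filter, Finset.mem_univ, true_and] at he ⊢
            rw [hhi e]; exact he)]
        rw [Finset.sum_congr rfl (fun v hv => ?_), Finset.sum_const, smul_eq_mul]
        simp only [Finset.mem_filter, Finset.mem_univ, true_and] at hv
        have heq : ((Finset.univ.filter fun e => elayer e = i).filter fun e => hi e = v)
            = Finset.univ.filter fun e => hi e = v := by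
          ext e
          simp only [Finset.mem_filter, Finset.mem_univ, true_and, and_iff_right_iff_imp]
          intro h1
          rw [← hhi e, h1, hv]
        rw [heq, ← hv, hdm v (by omega)]
      have hc2 : (Finset.univ.filter fun e => elayer e = i + 1).card
          = (Finset.univ.filter fun v => vlayer v = i).card * dplus i := by
        rw [Finset.card_eq_sum_card_fiberwise (f := lo)
          (t := Finset.univ.filter fun v => vlayer v = i)
          (fun e he => by
            simp only [Finset.mem_coe, Finset.mem_filter, Finset.mem_univ, true_and] at he ⊢
            rw [hlo e]; omega)]
        rw [Finset.sum_congr rfl (fun v hv => ?_), Finset.sum_const, smul_eq_mul]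
        simp only [Finset.mem_filter, Finset.mem_univ, true_and] at hv
        have heq : ((Finset.univ.filter fun e => elayer e = i + 1).filter fun e => lo e = v)
            = Finset.univ.filter fun e => lo e = v := by
          ext e
          simp only [Finset.mem_filter, Finset.mem_univ, true_and, and_iff_right_iff_imp]
          intro h1
          have h3 := hlo e; have h4 := hel e; rw [h1, hv] at h3; omega
        rw [heq, ← hv, hdp v (by omega)]
      have hWti : Wt n elayer W0 Wn1 i
          = ((Finset.univ.filter fun e => elayer e = i).card : ℝ) := by
        rw [Wt, if_neg h0, if_neg (by omega)]
      have hWti1 : Wt n elayer W0 Wn1 (i + 1)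
          = ((Finset.univ.filter fun e => elayer e = i + 1).card : ℝ) := by
        rw [Wt, if_neg (by omega), if_neg (by omega)]
      have hkey : Wt n elayer W0 Wn1 (i + 1) * (dminus i : ℝ)
          = Wt n elayer W0 Wn1 i * (dplus i : ℝ) := by
        rw [hWti, hWti1, hc1, hc2]; push_cast; ring
      have hre := key (a := Wt n elayer W0 Wn1 i) (b := Wt n elayer W0 Wn1 (i + 1))
        (x := (dminus i : ℝ)) (y := (dplus i : ℝ))
        (by rw [hWti]; positivity) (by rw [hWti1]; positivity) hkey
      rw [hX, hY, hX', hY', hdmu, hdpu]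
      simp only [Finset.card_empty, Nat.cast_zero, add_zero, zero_add]
      exact_mod_cast hre


end Stmt13
end
end
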